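/- arXiv:2203.15862 — 5 statements merged into one kernel-verified Lean document; each statement's English description precedes it below -/
import Mathlib

section
/- Let (G,s,z,δ,k) be an instance of Short Restless Temporal Path with d(s,1) ≤ k and let T be the table defined from this instance. If T[z,t_z] ≤ k for some vertex appearance (z,t_z) with z incident to an edge of E_{t_z}, then there is a δ-restless temporal s-z path of length at most k in G. -/
attribute [local instance] Classical.propDecidable

noncomputable section

/-- A temporal graph: a lifetime `tau` and, for each time step, a set of
undirected edges (unordered pairs of distinct vertices) over `V`;
edges exist only at time steps in `[1, tau]`. -/
structure TemporalGraph (V : Type*) where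
  tau : ℕ
  E : ℕ → Sym2 V → Prop
  time_mem : ∀ t e, E t e → 1 ≤ t ∧ t ≤ tau
  not_diag : ∀ t e, E t e → ¬ e.IsDiag

namespace TemporalGraph

variable {V : Type*}

/-- `G.IsPath s z m vs ts` : the sequence `(({vs (i-1), vs i}, ts i))_{i=1}^m` is a
temporal `s`-`z` path of length `m` in `G` (pairwise distinct vertices
`vs 0 = s, vs 1, …, vs m = z` and nondecreasing time stamps). -/
def IsPath (G : TemporalGraph V) (s z : V) (m : ℕ) (vs : ℕ → V) (ts : ℕ → ℕ) : Prop :=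
  vs 0 = s ∧ vs m = z ∧
  (∀ i j, i ≤ m → j ≤ m → i ≠ j → vs i ≠ vs j) ∧
  (∀ i, 1 ≤ i → i ≤ m → G.E (ts i) s(vs (i - 1), vs i)) ∧
  (∀ i, 1 ≤ i → i + 1 ≤ m → ts i ≤ ts (i + 1))

/-- `δ`-restless temporal path: consecutive time-edges are at most `δ` time steps apart. -/
def IsRestlessPath (G : TemporalGraph V) (δ : ℕ) (s z : V) (m : ℕ) (vs : ℕ → V)
    (ts : ℕ → ℕ) : Prop :=
  G.IsPath s z m vs ts ∧ ∀ i, 1 ≤ i → i + 1 ≤ m → ts (i + 1) ≤ ts i + δ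

/-- temporal `s`-`z` walk (vertices may repeat). -/
def IsWalk (G : TemporalGraph V) (s z : V) (m : ℕ) (vs : ℕ → V) (ts : ℕ → ℕ) : Prop :=
  vs 0 = s ∧ vs m = z ∧
  (∀ i, 1 ≤ i → i ≤ m → G.E (ts i) s(vs (i - 1), vs i)) ∧
  (∀ i, 1 ≤ i → i + 1 ≤ m → ts i ≤ ts (i + 1))

/-- `δ`-restless temporal walk. -/
def IsRestlessWalk (G : TemporalGraph V) (δ : ℕ) (s z : V) (m : ℕ) (vs : ℕ → V)
    (ts : ℕ → ℕ) : Prop :=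
  G.IsWalk s z m vs ts ∧ ∀ i, 1 ≤ i → i + 1 ≤ m → ts (i + 1) ≤ ts i + δ

/-- `G.dist z v t` : the minimum length of a temporal `v`-`z` path in `G` whose
departure time is at least `t`; `⊤` if no such path exists, and `0` for `v = z`. -/
def dist (G : TemporalGraph V) (z v : V) (t : ℕ) : ℕ∞ :=
  if v = z then 0
  else sInf {x : ℕ∞ | ∃ (m : ℕ) (vs : ℕ → V) (ts : ℕ → ℕ),
    G.IsPath v z m vs ts ∧ t ≤ ts 1 ∧ x = (m : ℕ∞)}

/-- The set `A_{a,t}^{b,t'}` of vertex appearances. -/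
def AreaAB (G : TemporalGraph V) (z a : V) (t : ℕ) (b : V) (t' : ℕ) : Set (V × ℕ) :=
  {w | G.dist z b t' < G.dist z w.1 w.2 ∧ G.dist z w.1 w.2 < G.dist z a t ∧
       t ≤ w.2 ∧ w.2 ≤ t'}

/-- The set `A^{b,t'}` of vertex appearances. -/
def AreaB (G : TemporalGraph V) (z b : V) (t' : ℕ) : Set (V × ℕ) :=
  {w | G.dist z b t' < G.dist z w.1 w.2 ∧ G.dist z w.1 w.2 < ⊤ ∧ w.2 ≤ t'}

/-- The temporal graph `G_{a,t}^{b,t'}`. -/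
def SubAB (G : TemporalGraph V) (z : V) (δ : ℕ) (a : V) (t : ℕ) (b : V) (t' : ℕ) :
    TemporalGraph V where
  tau := G.tau
  E := fun u e =>
    (G.E u e ∧ ∃ x y, e = s(x, y) ∧ (x, u) ∈ G.AreaAB z a t b t' ∧
        (y, u) ∈ G.AreaAB z a t b t') ∨
    (G.E u e ∧ u = t ∧ ∃ x, e = s(a, x) ∧ (x, t) ∈ G.AreaAB z a t b t') ∨
    (G.E u e ∧ t' ≤ u + δ ∧ ∃ x, e = s(x, b) ∧
        ((x, u) ∈ G.AreaAB z a t b t' ∨ (x = a ∧ u = t)))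
  time_mem := by rintro u e (⟨h, -⟩ | ⟨h, -⟩ | ⟨h, -⟩) <;> exact G.time_mem u e h
  not_diag := by rintro u e (⟨h, -⟩ | ⟨h, -⟩ | ⟨h, -⟩) <;> exact G.not_diag u e h

/-- The temporal graph `G^{b,t'}`. -/
def SubB (G : TemporalGraph V) (z : V) (δ : ℕ) (b : V) (t' : ℕ) : TemporalGraph V where
  tau := G.tau
  E := fun u e =>
    (G.E u e ∧ ∃ x y, e = s(x, y) ∧ (x, u) ∈ G.AreaB z b t' ∧ (y, u) ∈ G.AreaB z b t') ∨
    (G.E u e ∧ t' ≤ u + δ ∧ ∃ x, e = s(x, b) ∧ (x, u) ∈ G.AreaB z b t')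
  time_mem := by rintro u e (⟨h, -⟩ | ⟨h, -⟩) <;> exact G.time_mem u e h
  not_diag := by rintro u e (⟨h, -⟩ | ⟨h, -⟩) <;> exact G.not_diag u e h

/-- The vertex set of a temporal graph: all endpoints of its time-edges. -/
def vertexSet (G : TemporalGraph V) : Set V := {x | ∃ u e, G.E u e ∧ x ∈ e}

/-- Minimum length of a `δ`-restless temporal `a`-`b` path in `G` (`⊤` if none). -/
def restlessDist (G : TemporalGraph V) (δ : ℕ) (a b : V) : ℕ∞ :=
  sInf {x : ℕ∞ | ∃ m vs ts, G.IsRestlessPath δ a b m vs ts ∧ x = (m : ℕ∞)}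

/-- The base case of the table `T`: the value `T[u,t']` when `d(s,1) - d(u,t') ≤ ℓ`. -/
def tableBase (G : TemporalGraph V) (s z : V) (δ ℓ : ℕ) (u : V) (t' : ℕ) : ℕ∞ :=
  if u = s then 0
  else if 1 ≤ restlessDist (G.SubB z δ u t') δ s u ∧
          restlessDist (G.SubB z δ u t') δ s u ≤ (2 * ℓ : ℕ)
    then restlessDist (G.SubB z δ u t') δ s u
    else ⊤

/-- Fuelled version of the recursively defined table `T` (the fuel is an upper
bound on the recursion depth, which strictly decreases along the recursion of
the table via `d(s,1) - d(·,·)`). -/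
def tableFuel (G : TemporalGraph V) (s z : V) (δ ℓ : ℕ) : ℕ → V → ℕ → ℕ∞
  | 0, u, t' => tableBase G s z δ ℓ u t'
  | n + 1, u, t' =>
    if G.dist z s 1 - G.dist z u t' ≤ (ℓ : ℕ∞) then tableBase G s z δ ℓ u t'
    else sInf (insert ⊤ {x : ℕ∞ | ∃ (v : V) (t ℓ' : ℕ),
      1 ≤ t ∧ t ≤ t' ∧ (∃ e, G.E t e ∧ v ∈ e) ∧
      G.dist z u t' < G.dist z v t ∧ G.dist z v t ≤ G.dist z u t' + (ℓ : ℕ∞) + 1 ∧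
      1 ≤ ℓ' ∧ ℓ' ≤ 2 * ℓ + 1 ∧
      restlessDist (G.SubAB z δ v t u t') δ v u = (ℓ' : ℕ∞) ∧
      x = tableFuel G s z δ ℓ n v t + (ℓ' : ℕ∞)})

/-- The table `T` of the dynamic program, for the instance `(G,s,z,δ,k)`
(with `ℓ := k - d(s,1)`). -/
def table (G : TemporalGraph V) (s z : V) (δ k : ℕ) (u : V) (t' : ℕ) : ℕ∞ :=
  tableFuel G s z δ (k - (G.dist z s 1).toNat) ((G.dist z s 1).toNat + 1) u t'

/-- `vs i` is a distance separator of the temporal `s`-`z` path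
`(({vs (i-1), vs i}, ts i))_{i=1}^k` (with the convention `ts (k+1) = ts k`). -/
def IsDistSep (G : TemporalGraph V) (z : V) (k : ℕ) (vs : ℕ → V) (ts : ℕ → ℕ)
    (i : ℕ) : Prop :=
  (∀ j, j < i → G.dist z (vs i) (ts (i + 1)) < G.dist z (vs j) (ts (j + 1))) ∧
  (∀ j, i < j → j ≤ k → G.dist z (vs j) (ts (j + 1)) < G.dist z (vs i) (ts (i + 1)))

/-- The underlying (static) graph of a temporal graph. -/
def underlying (G : TemporalGraph V) : SimpleGraph V where
  Adj x y := ∃ t, G.E t s(x, y)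
  symm := by
    constructor
    rintro x y ⟨t, h⟩
    exact ⟨t, by rwa [Sym2.eq_swap]⟩
  loopless := by
    constructor
    rintro x ⟨t, h⟩
    exact G.not_diag t _ h (by simp)

/-- The set of non-isolated vertex appearances of `G`. -/
def NonIsolated (G : TemporalGraph V) : Set (V × ℕ) := {p | ∃ e, G.E p.2 e ∧ p.1 ∈ e}

/-- The weighted arcs of the auxiliary directed graph `D` (for destination `z`):
`DArc G z x y w` means there is an arc from `x` to `y` of weight `w`.
`Sum.inl ()` is the special vertex `z` of `D`; `Sum.inr (v, t)` is the vertex `v_t`. -/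
def DArc (G : TemporalGraph V) (z : V) : Unit ⊕ V × ℕ → Unit ⊕ V × ℕ → ℕ → Prop
  | Sum.inr (v, ta), Sum.inr (u, tb), w =>
      (w = 1 ∧ ta = tb ∧ v ≠ u ∧ G.E ta s(v, u)) ∨
      (w = 0 ∧ v = u ∧ (v, ta) ∈ G.NonIsolated ∧ (v, tb) ∈ G.NonIsolated ∧ tb < ta ∧
        ∀ t'', tb < t'' → t'' < ta → (v, t'') ∉ G.NonIsolated)
  | Sum.inl _, Sum.inr (u, tb), w =>
      w = 0 ∧ u = z ∧ (z, tb) ∈ G.NonIsolated ∧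
        ∀ t'', (z, t'') ∈ G.NonIsolated → t'' ≤ tb
  | _, _, _ => False

/-- The minimum total arc weight of a directed path in `D` from the special
vertex `z` to the vertex `v_t` (`⊤` if `v_t` is not reachable from `z`). -/
def dMinWeight (G : TemporalGraph V) (z v : V) (t : ℕ) : ℕ∞ :=
  sInf {x : ℕ∞ | ∃ (n : ℕ) (w : ℕ → Unit ⊕ V × ℕ) (wt : ℕ → ℕ),
    w 0 = Sum.inl () ∧ w n = Sum.inr (v, t) ∧
    (∀ i j, i ≤ n → j ≤ n → i ≠ j → w i ≠ w j) ∧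
    (∀ i, i < n → DArc G z (w i) (w (i + 1)) (wt i)) ∧
    x = ∑ i ∈ Finset.range n, (wt i : ℕ∞)}

private lemma exists_le_of_sInf_le' {S : Set ℕ∞} {c : ℕ} (h : sInf S ≤ (c : ℕ∞)) :
    ∃ x ∈ S, x ≤ (c : ℕ∞) := by
  have h2 : sInf S < (c : ℕ∞) + 1 :=
    lt_of_le_of_lt h ((ENat.lt_add_one_iff (by simp)).mpr le_rfl)
  obtain ⟨a, ha, hlt⟩ := sInf_lt_iff.mp h2
  exact ⟨a, ha, (ENat.lt_add_one_iff (by simp)).mp hlt⟩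

lemma dist_mono (G : TemporalGraph V) (z v : V) {t1 t2 : ℕ} (h : t1 ≤ t2) :
    G.dist z v t1 ≤ G.dist z v t2 := by
  unfold dist
  split_ifs with hv
  · exact le_rfl
  · refine sInf_le_sInf ?_
    rintro x ⟨m, vs, ts, hP, ht, hx⟩
    exact ⟨m, vs, ts, hP, le_trans h ht, hx⟩

lemma subAB_le (G : TemporalGraph V) (z : V) (δ : ℕ) (a : V) (t : ℕ) (b : V) (t' : ℕ) :
    ∀ τ e, (G.SubAB z δ a t b t').E τ e → G.E τ e := by
  rintro τ e (⟨h, -⟩ | ⟨h, -⟩ | ⟨h, -⟩) <;> exact h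

lemma subB_le (G : TemporalGraph V) (z : V) (δ : ℕ) (b : V) (t' : ℕ) :
    ∀ τ e, (G.SubB z δ b t').E τ e → G.E τ e := by
  rintro τ e (⟨h, -⟩ | ⟨h, -⟩) <;> exact h

lemma restless_mono {G H : TemporalGraph V} (hle : ∀ t e, H.E t e → G.E t e)
    {δ : ℕ} {s z : V} {m : ℕ} {vs : ℕ → V} {ts : ℕ → ℕ}
    (h : H.IsRestlessPath δ s z m vs ts) : G.IsRestlessPath δ s z m vs ts := by
  obtain ⟨⟨h0, h1, h2, h3, h4⟩, h5⟩ := h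
  exact ⟨⟨h0, h1, h2, fun i a b => hle _ _ (h3 i a b), h4⟩, h5⟩

lemma ts_mono' {m : ℕ} {ts : ℕ → ℕ} (h : ∀ i, 1 ≤ i → i + 1 ≤ m → ts i ≤ ts (i + 1)) :
    ∀ a b, 1 ≤ a → a ≤ b → b ≤ m → ts a ≤ ts b := by
  intro a b ha hab hbm
  induction b, hab using Nat.le_induction with
  | base => exact le_rfl
  | succ b hab ih => exact le_trans (ih (by omega)) (h b (by omega) (by omega))

section Sub

variable {G : TemporalGraph V} {z : V} {δ : ℕ} {v : V} {t : ℕ} {u : V} {t' τ : ℕ}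

lemma subB_endpoint {x y : V} (hE : (G.SubB z δ u t').E τ s(x, y)) (hxu : x ≠ u) :
    (x, τ) ∈ G.AreaB z u t' := by
  rcases hE with ⟨-, a, b, he, ha, hb⟩ | ⟨-, hτ, a, he, ha⟩
  · rcases Sym2.eq_iff.mp he with ⟨rfl, rfl⟩ | ⟨rfl, rfl⟩
    · exact ha
    · exact hb
  · rcases Sym2.eq_iff.mp he with ⟨rfl, rfl⟩ | ⟨rfl, rfl⟩
    · exact ha
    · exact absurd rfl hxu

lemma subB_last {x : V} (hE : (G.SubB z δ u t').E τ s(x, u)) (hxu : x ≠ u) :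
    τ ≤ t' ∧ t' ≤ τ + δ := by
  rcases hE with ⟨-, a, b, he, ha, hb⟩ | ⟨-, hτ, a, he, ha⟩
  · exfalso
    rcases Sym2.eq_iff.mp he with ⟨rfl, rfl⟩ | ⟨rfl, rfl⟩
    · exact absurd (G.dist_mono z u hb.2.2) (not_le.mpr hb.1)
    · exact absurd (G.dist_mono z u ha.2.2) (not_le.mpr ha.1)
  · have hτ' : τ ≤ t' := by
      rcases Sym2.eq_iff.mp he with ⟨rfl, -⟩ | ⟨rfl, -⟩
      · exact ha.2.2
      · exact absurd rfl hxu
    exact ⟨hτ', hτ⟩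

variable (hvu : G.dist z u t' < G.dist z v t) (htt' : t ≤ t')

include hvu htt'

lemma subAB_vu_ne : v ≠ u := by
  intro h
  subst h
  exact absurd (G.dist_mono z v htt') (not_le.mpr hvu)

lemma subAB_endpoint {x y : V} (hE : (G.SubAB z δ v t u t').E τ s(x, y))
    (hxu : x ≠ u) (hxv : x ≠ v) : (x, τ) ∈ G.AreaAB z v t u t' := by
  rcases hE with ⟨-, a, b, he, ha, hb⟩ | ⟨-, hτ, a, he, ha⟩ | ⟨-, hτ, a, he, ha⟩
  · rcases Sym2.eq_iff.mp he with ⟨rfl, rfl⟩ | ⟨rfl, rfl⟩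
    · exact ha
    · exact hb
  · rcases Sym2.eq_iff.mp he with ⟨h1, -⟩ | ⟨rfl, rfl⟩
    · exact absurd h1 hxv
    · subst hτ
      exact ha
  · rcases Sym2.eq_iff.mp he with ⟨rfl, -⟩ | ⟨rfl, -⟩
    · rcases ha with ha | ⟨hav, -⟩
      · exact ha
      · exact absurd hav hxv
    · exact absurd rfl hxu

lemma subAB_first {y : V} (hE : (G.SubAB z δ v t u t').E τ s(v, y)) : τ = t := by
  have hvarea : (v, τ) ∈ G.AreaAB z v t u t' → False := by
    intro hv
    exact absurd (G.dist_mono z v hv.2.2.1) (not_le.mpr hv.2.1)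
  rcases hE with ⟨-, a, b, he, ha, hb⟩ | ⟨-, hτ, a, he, ha⟩ | ⟨-, hτ, a, he, ha⟩
  · exfalso
    rcases Sym2.eq_iff.mp he with ⟨rfl, rfl⟩ | ⟨rfl, rfl⟩
    · exact hvarea ha
    · exact hvarea hb
  · exact hτ
  · rcases Sym2.eq_iff.mp he with ⟨rfl, rfl⟩ | ⟨h1, -⟩
    · rcases ha with ha' | ⟨-, hτt⟩
      · exact absurd ha' hvarea
      · exact hτt
    · exact absurd h1 (subAB_vu_ne hvu htt')

lemma subAB_last {x : V} (hE : (G.SubAB z δ v t u t').E τ s(x, u)) (hxu : x ≠ u) :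
    τ ≤ t' ∧ t' ≤ τ + δ := by
  have huarea : ∀ τ'' : ℕ, τ'' ≤ t' → (u, τ'') ∈ G.AreaAB z v t u t' → False := by
    intro τ'' hle hu
    exact absurd (G.dist_mono z u hle) (not_le.mpr hu.1)
  rcases hE with ⟨-, a, b, he, ha, hb⟩ | ⟨-, hτ, a, he, ha⟩ | ⟨-, hτ, a, he, ha⟩
  · exfalso
    rcases Sym2.eq_iff.mp he with ⟨rfl, rfl⟩ | ⟨rfl, rfl⟩
    · exact huarea τ hb.2.2.2 hb
    · exact huarea τ ha.2.2.2 ha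
  · exfalso
    rcases Sym2.eq_iff.mp he with ⟨-, rfl⟩ | ⟨-, h2⟩
    · exact huarea t htt' ha
    · exact (subAB_vu_ne hvu htt') h2.symm
  · have hτ' : τ ≤ t' := by
      rcases Sym2.eq_iff.mp he with ⟨rfl, -⟩ | ⟨rfl, -⟩
      · rcases ha with ha' | ⟨-, hτt⟩
        · exact ha'.2.2.2
        · omega
      · exact absurd rfl hxu
    exact ⟨hτ', hτ⟩

lemma subAB_path_facts {m : ℕ} {vs : ℕ → V} {ts : ℕ → ℕ}
    (hP : (G.SubAB z δ v t u t').IsRestlessPath δ v u m vs ts) :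
    G.IsRestlessPath δ v u m vs ts ∧ 1 ≤ m ∧ ts 1 = t ∧ ts m ≤ t' ∧ t' ≤ ts m + δ ∧
    (∀ j, 1 ≤ j → j < m → (vs j, ts (j + 1)) ∈ G.AreaAB z v t u t') := by
  have hvune := subAB_vu_ne hvu htt'
  obtain ⟨⟨h0, hm, hdist, hedge, hmono⟩, hrest⟩ := hP
  have hm1 : 1 ≤ m := by
    rcases Nat.eq_zero_or_pos m with h | h
    · exact absurd (by rw [← h0, ← h]; exact hm) hvune
    · exact h
  have e1 := hedge 1 le_rfl hm1
  rw [show (1 : ℕ) - 1 = 0 from rfl, h0] at e1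
  have hts1 : ts 1 = t := subAB_first hvu htt' e1
  have em := hedge m hm1 le_rfl
  rw [hm] at em
  have hlast : vs (m - 1) ≠ u := by
    have := hdist (m - 1) m (by omega) le_rfl (by omega)
    rwa [hm] at this
  have hw := subAB_last hvu htt' em hlast
  refine ⟨restless_mono (subAB_le G z δ v t u t')
      ⟨⟨h0, hm, hdist, hedge, hmono⟩, hrest⟩, hm1, hts1, hw.1, hw.2, ?_⟩
  intro j hj1 hjm
  have ej := hedge (j + 1) (by omega) (by omega)
  rw [Nat.add_sub_cancel] at ej
  have hju : vs j ≠ u := by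
    have := hdist j m (by omega) le_rfl (by omega)
    rwa [hm] at this
  have hjv : vs j ≠ v := by
    have := hdist j 0 (by omega) (Nat.zero_le m) (by omega)
    rwa [h0] at this
  exact subAB_endpoint hvu htt' ej hju hjv

end Sub

lemma base_correct (G : TemporalGraph V) (s z : V) (δ ℓ : ℕ) (u : V) (t' c : ℕ)
    (hus : u ≠ s) (h : tableBase G s z δ ℓ u t' ≤ (c : ℕ∞)) :
    ∃ m vs ts, G.IsRestlessPath δ s u m vs ts ∧ m ≤ c ∧ 1 ≤ m ∧
      ts m ≤ t' ∧ t' ≤ ts m + δ ∧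
      ∀ i, i < m → G.dist z u t' < G.dist z (vs i) (ts (i + 1)) := by
  rw [tableBase, if_neg hus] at h
  split_ifs at h with hcond
  · rw [restlessDist] at h
    obtain ⟨x, ⟨m, vs, ts, hP, rfl⟩, hxc⟩ := exists_le_of_sInf_le' h
    have hmc : m ≤ c := by exact_mod_cast hxc
    obtain ⟨⟨h0, hm, hdist, hedge, hmono⟩, hrest⟩ := hP
    have hm1 : 1 ≤ m := by
      rcases Nat.eq_zero_or_pos m with h | h
      · exact absurd (by rw [← hm, h]; exact h0) hus
      · exact h
    have em := hedge m hm1 le_rfl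
    rw [hm] at em
    have hlast : vs (m - 1) ≠ u := by
      have := hdist (m - 1) m (by omega) le_rfl (by omega)
      rwa [hm] at this
    have hw := subB_last em hlast
    refine ⟨m, vs, ts, restless_mono (subB_le G z δ u t')
        ⟨⟨h0, hm, hdist, hedge, hmono⟩, hrest⟩, hmc, hm1, hw.1, hw.2, ?_⟩
    intro i hi
    have ei := hedge (i + 1) (by omega) (by omega)
    rw [Nat.add_sub_cancel] at ei
    have hiu : vs i ≠ u := by
      have := hdist i m (by omega) le_rfl (by omega)
      rwa [hm] at this
    exact (subB_endpoint ei hiu).1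
  · exfalso
    exact absurd (top_le_iff.mp h) (by simp)

lemma tableFuel_correct (G : TemporalGraph V) (s z : V) (δ ℓ : ℕ) :
    ∀ (n : ℕ) (u : V) (t' c : ℕ), u ≠ s →
      tableFuel G s z δ ℓ n u t' ≤ (c : ℕ∞) →
      ∃ m vs ts, G.IsRestlessPath δ s u m vs ts ∧ m ≤ c ∧ 1 ≤ m ∧
        ts m ≤ t' ∧ t' ≤ ts m + δ ∧
        ∀ i, i < m → G.dist z u t' < G.dist z (vs i) (ts (i + 1)) := by
  intro n
  induction n with
  | zero =>
    intro u t' c hus h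
    rw [tableFuel] at h
    exact base_correct G s z δ ℓ u t' c hus h
  | succ n ih =>
    intro u t' c hus h
    rw [tableFuel] at h
    split_ifs at h with hguard
    · exact base_correct G s z δ ℓ u t' c hus h
    · obtain ⟨x, hxmem, hxc⟩ := exists_le_of_sInf_le' h
      rw [Set.mem_insert_iff] at hxmem
      rcases hxmem with rfl | hxS
      · exact absurd (top_le_iff.mp hxc) (by simp)
      obtain ⟨v, t, ℓ', ht1, htt', hincv, hvu, hvub, hl1, hl2, hRD, rfl⟩ := hxS
      -- extract the SubAB path R
      rw [restlessDist] at hRD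
      obtain ⟨xr, ⟨mR, vsR, tsR, hPR, rfl⟩, hxr⟩ := exists_le_of_sInf_le' (le_of_eq hRD)
      have hmRl : mR ≤ ℓ' := by exact_mod_cast hxr
      obtain ⟨hGR, hmR1, htsR1, htsRm, htsRd, hareaR⟩ := subAB_path_facts hvu htt' hPR
      have hl'c : ℓ' ≤ c := by exact_mod_cast le_trans le_add_self hxc
      by_cases hvs : v = s
      · -- the SubAB path itself is the desired s-u path
        subst hvs
        obtain ⟨⟨hR0, hRm, hRdist, hRedge, hRmono⟩, hRrest⟩ := hGR
        refine ⟨mR, vsR, tsR, ⟨⟨hR0, hRm, hRdist, hRedge, hRmono⟩, hRrest⟩,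
          le_trans hmRl hl'c, hmR1, htsRm, htsRd, ?_⟩
        intro i hi
        rcases Nat.eq_zero_or_pos i with rfl | hi1
        · simpa [hR0, htsR1] using hvu
        · exact (hareaR i hi1 hi).1
      · -- recursive case: concatenate
        have hane : tableFuel G s z δ ℓ n v t ≠ ⊤ :=
          ne_top_of_le_ne_top (by simp) (le_trans le_self_add hxc)
        set aN := (tableFuel G s z δ ℓ n v t).toNat with haNdef
        have haN : (aN : ℕ∞) = tableFuel G s z δ ℓ n v t := ENat.coe_toNat hane
        have haNc : aN + ℓ' ≤ c := by
          rw [← haN] at hxc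
          exact_mod_cast hxc
        obtain ⟨mQ, vsQ, tsQ, hGQ, hmQc, hmQ1, htsQm, htsQd, hQarea⟩ :=
          ih v t (c - ℓ') hvs (by rw [← haN]; exact_mod_cast (by omega : aN ≤ c - ℓ'))
        obtain ⟨⟨hQ0, hQm, hQdist, hQedge, hQmono⟩, hQrest⟩ := hGQ
        obtain ⟨⟨hR0, hRm, hRdist, hRedge, hRmono⟩, hRrest⟩ := hGR
        set M := mQ + mR with hM
        set vs : ℕ → V := fun i => if i ≤ mQ then vsQ i else vsR (i - mQ) with hvs'
        set ts : ℕ → ℕ := fun i => if i ≤ mQ then tsQ i else tsR (i - mQ) with hts'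
        have hvsle : ∀ i, i ≤ mQ → vs i = vsQ i := fun i h => if_pos h
        have hvsgt : ∀ i, mQ < i → vs i = vsR (i - mQ) := fun i h => if_neg (by omega)
        have htsle : ∀ i, i ≤ mQ → ts i = tsQ i := fun i h => if_pos h
        have htsgt : ∀ i, mQ < i → ts i = tsR (i - mQ) := fun i h => if_neg (by omega)
        have hvsge : ∀ i, mQ ≤ i → vs i = vsR (i - mQ) := by
          intro i hi
          rcases eq_or_lt_of_le hi with rfl | h
          · rw [hvsle mQ le_rfl, hQm, Nat.sub_self, hR0]
          · exact hvsgt i h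
        have hQts := ts_mono' hQmono
        have hcross : ∀ i, i < mQ → ∀ w τ, tsQ mQ ≤ τ →
            G.dist z w τ < G.dist z v t → vsQ i ≠ w := by
          intro i hi w τ hτ hw heq
          rw [← heq] at hw
          have h1 : G.dist z v t < G.dist z (vsQ i) (tsQ (i + 1)) := hQarea i hi
          have h2 : tsQ (i + 1) ≤ τ :=
            le_trans (hQts (i + 1) mQ (by omega) (by omega) le_rfl) hτ
          exact absurd (G.dist_mono z (vsQ i) h2) (not_le.mpr (lt_trans hw h1))
        have hdistinct : ∀ i j, i ≤ M → j ≤ M → i < j → vs i ≠ vs j := by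
          intro i j hiM hjM hij
          by_cases hj : j ≤ mQ
          · rw [hvsle i (by omega), hvsle j hj]
            exact hQdist i j (by omega) hj (by omega)
          · push_neg at hj
            rw [hvsgt j hj]
            by_cases hi : i ≤ mQ
            · rw [hvsle i hi]
              by_cases him : i = mQ
              · rw [him, hQm, ← hR0]
                exact fun hh =>
                  hRdist 0 (j - mQ) (Nat.zero_le mR) (by omega) (by omega) hh
              · have hilt : i < mQ := by omega
                by_cases hjm : j - mQ = mR
                · rw [hjm, hRm]
                  exact hcross i hilt u t' (le_trans htsQm htt') hvu
                · have harea := hareaR (j - mQ) (by omega) (by omega)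
                  exact hcross i hilt (vsR (j - mQ)) (tsR (j - mQ + 1))
                    (le_trans htsQm harea.2.2.1) harea.2.1
            · push_neg at hi
              rw [hvsgt i hi]
              exact hRdist (i - mQ) (j - mQ) (by omega) (by omega) (by omega)
        refine ⟨M, vs, ts, ⟨⟨?_, ?_, ?_, ?_, ?_⟩, ?_⟩, ?_, ?_, ?_, ?_, ?_⟩
        · rw [hvsle 0 (Nat.zero_le mQ), hQ0]
        · rw [hvsge M (by omega), show M - mQ = mR by omega, hRm]
        · intro i j hi hj hne
          rcases lt_or_gt_of_ne hne with hlt | hgt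
          · exact hdistinct i j hi hj hlt
          · exact (hdistinct j i hj hi hgt).symm
        · intro i h1 hiM
          by_cases hi : i ≤ mQ
          · rw [hvsle i hi, hvsle (i - 1) (by omega), htsle i hi]
            exact hQedge i h1 hi
          · push_neg at hi
            rw [htsgt i hi, hvsgt i hi, hvsge (i - 1) (by omega),
              show i - 1 - mQ = i - mQ - 1 by omega]
            exact hRedge (i - mQ) (by omega) (by omega)
        · intro i h1 hi1M
          by_cases hi1 : i + 1 ≤ mQ
          · rw [htsle i (by omega), htsle (i + 1) hi1]
            exact hQmono i h1 hi1
          · by_cases hi : i ≤ mQ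
            · rw [htsle i hi, htsgt (i + 1) (by omega),
                show i + 1 - mQ = 1 by omega, htsR1, show i = mQ by omega]
              exact htsQm
            · push_neg at hi
              rw [htsgt i hi, htsgt (i + 1) (by omega),
                show i + 1 - mQ = (i - mQ) + 1 by omega]
              exact hRmono (i - mQ) (by omega) (by omega)
        · intro i h1 hi1M
          by_cases hi1 : i + 1 ≤ mQ
          · rw [htsle i (by omega), htsle (i + 1) hi1]
            exact hQrest i h1 hi1
          · by_cases hi : i ≤ mQ
            · rw [htsle i hi, htsgt (i + 1) (by omega),
                show i + 1 - mQ = 1 by omega, htsR1, show i = mQ by omega]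
              exact htsQd
            · push_neg at hi
              rw [htsgt i hi, htsgt (i + 1) (by omega),
                show i + 1 - mQ = (i - mQ) + 1 by omega]
              exact hRrest (i - mQ) (by omega) (by omega)
        · omega
        · omega
        · rw [htsgt M (by omega), show M - mQ = mR by omega]
          exact htsRm
        · rw [htsgt M (by omega), show M - mQ = mR by omega]
          exact htsRd
        · intro i hiM
          by_cases hi : i < mQ
          · rw [hvsle i (by omega), htsle (i + 1) (by omega)]
            exact lt_trans hvu (hQarea i hi)
          · by_cases him : i = mQ
            · rw [him, hvsle mQ le_rfl, hQm, htsgt (mQ + 1) (by omega),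
                show mQ + 1 - mQ = 1 by omega, htsR1]
              exact hvu
            · rw [hvsgt i (by omega), htsgt (i + 1) (by omega),
                show i + 1 - mQ = (i - mQ) + 1 by omega]
              exact (hareaR (i - mQ) (by omega) (by omega)).1

end TemporalGraph

open TemporalGraph

/-- If `T[z,t_z] ≤ k` for a vertex appearance `(z,t_z)` with
`z` incident to an edge of `E_{t_z}`, then there is a `δ`-restless temporal
`s`-`z` path of length at most `k` in `G`. -/
theorem statement1 {V : Type*} (G : TemporalGraph V) (s z : V) (δ k : ℕ)
    (hsz : s ≠ z) (hδ : 1 ≤ δ) (hk : 1 ≤ k)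
    (hd : G.dist z s 1 ≤ (k : ℕ∞)) (tz : ℕ)
    (hinc : ∃ e, G.E tz e ∧ z ∈ e)
    (hT : G.table s z δ k z tz ≤ (k : ℕ∞)) :
    ∃ m vs ts, G.IsRestlessPath δ s z m vs ts ∧ m ≤ k := by
  rw [table] at hT
  obtain ⟨m, vs, ts, hP, hm, -⟩ :=
    tableFuel_correct G s z δ (k - (G.dist z s 1).toNat)
      ((G.dist z s 1).toNat + 1) z tz k (Ne.symm hsz) hT
  exact ⟨m, vs, ts, hP, hm⟩
end
end

section
/- Let ℓ ∈ ℕ_0 and let P = (({v_{i-1},v_i},t_i))_{i=1}^k be a δ-restless temporal s-z path in a temporal graph G of length k ≤ d(s,1) + ℓ (with the conventions t_0 := 1 and t_{k+1} := t_k). Then for every i ∈ [0,k] there exists j ∈ [0,2ℓ] with i + j ≤ k such that v_{i+j} is a distance separator of P. -/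
attribute [local instance] Classical.propDecidable

noncomputable section

open TemporalGraph


section Aux

variable {V : Type*}

private lemma aux_ts_mono {G : TemporalGraph V} {s z : V} {m : ℕ} {vs : ℕ → V} {ts : ℕ → ℕ}
    (h : G.IsPath s z m vs ts) :
    ∀ b a, 1 ≤ a → a ≤ b → b ≤ m → ts a ≤ ts b := by
  intro b
  induction b with
  | zero => intro a h1 h2 _; exact absurd (h1.trans h2) (by omega)
  | succ n ih =>
    intro a h1 h2 h3
    rcases Nat.lt_or_ge a (n+1) with hlt | hge
    · exact le_trans (ih a h1 (by omega) (by omega)) (h.2.2.2.2 n (by omega) (by omega))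
    · have : a = n + 1 := by omega
      rw [this]

private lemma aux_dist_le {G : TemporalGraph V} {z v : V} {t m : ℕ} {vs : ℕ → V} {ts : ℕ → ℕ}
    (hp : G.IsPath v z m vs ts) (ht : t ≤ ts 1) : G.dist z v t ≤ (m : ℕ∞) := by
  by_cases hvz : v = z
  · simp [TemporalGraph.dist, hvz]
  · rw [TemporalGraph.dist, if_neg hvz]
    exact sInf_le ⟨m, vs, ts, hp, ht, rfl⟩

private lemma aux_dist_mono {G : TemporalGraph V} {z v : V} {t t' : ℕ} (h : t ≤ t') :
    G.dist z v t ≤ G.dist z v t' := by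
  by_cases hvz : v = z
  · simp [TemporalGraph.dist, hvz]
  · rw [TemporalGraph.dist, if_neg hvz, TemporalGraph.dist, if_neg hvz]
    apply sInf_le_sInf
    rintro x ⟨m, vs, ts, hp, ht, rfl⟩
    exact ⟨m, vs, ts, hp, h.trans ht, rfl⟩

private lemma aux_dist_spec {G : TemporalGraph V} {z v : V} {t : ℕ} (h : G.dist z v t ≠ ⊤) :
    ∃ (m : ℕ) (vs : ℕ → V) (ts : ℕ → ℕ), G.IsPath v z m vs ts ∧ t ≤ ts 1 ∧
      G.dist z v t = (m : ℕ∞) := by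
  by_cases hvz : v = z
  · refine ⟨0, fun _ => z, fun _ => t, ?_, le_refl _, by simp [TemporalGraph.dist, hvz]⟩
    refine ⟨hvz ▸ rfl, rfl, ?_, ?_, ?_⟩
    · intro i j hi hj hij
      omega
    · intro i h1 h2; omega
    · intro i h1 h2; omega
  · rw [TemporalGraph.dist, if_neg hvz] at h ⊢
    set Sset : Set ℕ∞ := {x : ℕ∞ | ∃ (m : ℕ) (vs : ℕ → V) (ts : ℕ → ℕ),
      G.IsPath v z m vs ts ∧ t ≤ ts 1 ∧ x = (m : ℕ∞)} with hSset
    have hne : ∃ n : ℕ, (n : ℕ∞) ∈ Sset := by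
      by_contra hno
      push_neg at hno
      apply h
      rw [sInf_eq_top]
      rintro a ⟨m, vs', ts', hp, ht, rfl⟩
      exact absurd ⟨m, vs', ts', hp, ht, rfl⟩ (hno m)
    have hinf : sInf Sset = (Nat.find hne : ℕ∞) := by
      apply le_antisymm
      · exact sInf_le (Nat.find_spec hne)
      · apply le_sInf
        rintro b ⟨m, vs', ts', hp, ht, rfl⟩
        exact_mod_cast Nat.find_min' hne ⟨m, vs', ts', hp, ht, rfl⟩
    obtain ⟨m, vs', ts', hp, ht, heq⟩ := Nat.find_spec hne
    exact ⟨m, vs', ts', hp, ht, by rw [hinf, heq]⟩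

private lemma aux_dist_suffix {G : TemporalGraph V} {s z : V} {k : ℕ} {vs : ℕ → V} {ts : ℕ → ℕ}
    (hP : G.IsPath s z k vs ts) {j : ℕ} (hj : j ≤ k) :
    G.dist z (vs j) (ts (j+1)) ≤ ((k - j : ℕ) : ℕ∞) := by
  obtain ⟨h0, hz, hdist, hedge, hmono⟩ := hP
  refine aux_dist_le (vs := fun a => vs (j + a)) (ts := fun a => ts (j + a)) ⟨rfl, ?_, ?_, ?_, ?_⟩
    (le_refl _)
  · show vs (j + (k - j)) = z
    rw [show j + (k - j) = k by omega, hz]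
  · intro a b ha hb hab
    exact hdist (j + a) (j + b) (by omega) (by omega) (by omega)
  · intro a h1 h2
    have := hedge (j + a) (by omega) (by omega)
    have he : j + a - 1 = j + (a - 1) := by omega
    rwa [he] at this
  · intro a h1 h2
    exact hmono (j + a) (by omega) (by omega)

private lemma aux_dist_step {G : TemporalGraph V} {s z : V} {k : ℕ} {vs : ℕ → V} {ts : ℕ → ℕ}
    (hP : G.IsPath s z k vs ts) (hconv : ts (k + 1) = ts k) {j : ℕ} (hj : j < k) :
    G.dist z (vs j) (ts (j+1)) ≤ G.dist z (vs (j+1)) (ts (j+2)) + 1 := by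
  by_cases htop : G.dist z (vs (j+1)) (ts (j+2)) = ⊤
  · rw [htop]; exact le_top
  obtain ⟨n, us, σ, hpath, hdep, heq⟩ := aux_dist_spec htop
  have hts12 : ts (j+1) ≤ ts (j+2) := by
    rcases Nat.lt_or_ge (j+1) k with hlt | hge
    · exact hP.2.2.2.2 (j+1) (by omega) (by omega)
    · have hjk : j + 1 = k := by omega
      rw [show j + 2 = k + 1 by omega, hconv, ← hjk]
  have hvjz : vs j ≠ z := by
    have := hP.2.2.1 j k (by omega) le_rfl (by omega)
    rwa [hP.2.1] at this
  by_cases hmem : ∃ p, p ≤ n ∧ us p = vs j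
  · obtain ⟨p, hpn, hup⟩ := hmem
    have hp0 : p ≠ 0 := by
      intro hp
      rw [hp, hpath.1] at hup
      exact hP.2.2.1 (j+1) j (by omega) (by omega) (by omega) hup
    have hpn' : p ≠ n := by
      intro hp
      rw [hp, hpath.2.1] at hup
      exact hvjz hup.symm
    have hle : G.dist z (vs j) (ts (j+1)) ≤ ((n - p : ℕ) : ℕ∞) := by
      refine aux_dist_le (vs := fun a => us (p + a)) (ts := fun a => σ (p + a))
        ⟨hup ▸ rfl, ?_, ?_, ?_, ?_⟩ ?_
      · show us (p + (n - p)) = z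
        rw [show p + (n - p) = n by omega, hpath.2.1]
      · intro a b ha hb hab
        exact hpath.2.2.1 (p + a) (p + b) (by omega) (by omega) (by omega)
      · intro a h1 h2
        have := hpath.2.2.2.1 (p + a) (by omega) (by omega)
        have he : p + a - 1 = p + (a - 1) := by omega
        rwa [he] at this
      · intro a h1 h2
        exact hpath.2.2.2.2 (p + a) (by omega) (by omega)
      · show ts (j+1) ≤ σ (p + 1)
        calc ts (j+1) ≤ ts (j+2) := hts12
          _ ≤ σ 1 := hdep
          _ ≤ σ (p+1) := aux_ts_mono hpath (p+1) 1 (by omega) (by omega) (by omega)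
    refine le_trans hle ?_
    rw [heq]
    have hcast : ((n - p : ℕ) : ℕ∞) ≤ ((n + 1 : ℕ) : ℕ∞) := by
      exact_mod_cast (by omega : n - p ≤ n + 1)
    refine le_trans hcast (le_of_eq ?_)
    push_cast
    ring
  · push_neg at hmem
    have hle : G.dist z (vs j) (ts (j+1)) ≤ ((n + 1 : ℕ) : ℕ∞) := by
      refine aux_dist_le
        (vs := fun a => if a = 0 then vs j else us (a - 1))
        (ts := fun a => if a ≤ 1 then ts (j+1) else σ (a - 1)) ⟨rfl, ?_, ?_, ?_, ?_⟩ ?_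
      · show (if n + 1 = 0 then vs j else us (n + 1 - 1)) = z
        rw [if_neg (by omega)]
        simpa using hpath.2.1
      · intro a b ha hb hab
        dsimp only
        rcases Nat.eq_zero_or_pos a with ha0 | ha0 <;> rcases Nat.eq_zero_or_pos b with hb0 | hb0
        · omega
        · subst ha0
          rw [if_pos rfl, if_neg (by omega)]
          exact fun hcon => hmem (b-1) (by omega) hcon.symm
        · subst hb0
          rw [if_pos rfl, if_neg (by omega)]
          exact fun hcon => hmem (a-1) (by omega) hcon
        · rw [if_neg (by omega : ¬ a = 0), if_neg (by omega : ¬ b = 0)]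
          exact hpath.2.2.1 (a-1) (b-1) (by omega) (by omega) (by omega)
      · intro a h1 h2
        dsimp only
        rcases Nat.lt_or_ge a 2 with ha2 | ha2
        · have ha1 : a = 1 := by omega
          subst ha1
          rw [if_pos (le_refl 1), if_neg (by omega : ¬ (1:ℕ) = 0),
            show (1:ℕ) - 1 = 0 by omega, if_pos rfl]
          have hedge := hP.2.2.2.1 (j+1) (by omega) (by omega)
          rw [show j + 1 - 1 = j by omega] at hedge
          rw [show us 0 = vs (j+1) from hpath.1]
          exact hedge
        · rw [if_neg (by omega : ¬ a ≤ 1), if_neg (by omega : ¬ a = 0),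
            if_neg (by omega : ¬ a - 1 = 0)]
          exact hpath.2.2.2.1 (a - 1) (by omega) (by omega)
      · intro a h1 h2
        dsimp only
        rcases Nat.lt_or_ge a 2 with ha2 | ha2
        · have ha1 : a = 1 := by omega
          subst ha1
          rw [if_pos (le_refl 1), if_neg (by omega : ¬ (1+1:ℕ) ≤ 1),
            show (1:ℕ) + 1 - 1 = 1 by omega]
          calc ts (j+1) ≤ ts (j+2) := hts12
            _ ≤ σ 1 := hdep
        · rw [if_neg (by omega : ¬ a ≤ 1), if_neg (by omega : ¬ a + 1 ≤ 1),
            show a + 1 - 1 = a by omega]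
          have hm := hpath.2.2.2.2 (a-1) (by omega) (by omega)
          rwa [show a - 1 + 1 = a by omega] at hm
      · show ts (j+1) ≤ (if 1 ≤ 1 then ts (j+1) else σ 0)
        rw [if_pos (le_refl 1)]
    rw [heq]
    refine le_trans hle (le_of_eq ?_)
    push_cast
    ring

private lemma sep_core (D : ℕ → ℕ) (k ℓ : ℕ) (h1 : D k = 0)
    (h2 : ∀ j, j < k → D j ≤ D (j+1) + 1)
    (h3 : k ≤ D 0 + ℓ) (h5 : ∀ j, j < k → 1 ≤ D j) :
    ∀ i, i ≤ k → ∃ m, i ≤ m ∧ m ≤ i + 2*ℓ ∧ m ≤ k ∧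
      (∀ j, j < m → D m < D j) ∧ (∀ j, m < j → j ≤ k → D j < D m) := by
  classical
  set S : ℕ → ℕ := fun n => ∑ j ∈ Finset.range n, (D (j+1) + 1 - D j) with hSdef
  have hS : ∀ n, n ≤ k → S n + D 0 = n + D n := by
    intro n
    induction n with
    | zero => simp [hSdef]
    | succ n ih =>
      intro hn
      have hb := h2 n (by omega)
      have := ih (by omega)
      have hstep : S (n+1) = S n + (D (n+1) + 1 - D n) := Finset.sum_range_succ _ n
      omega
  have hSmono : ∀ a b, a ≤ b → S a ≤ S b := by
    intro a b hab
    exact Finset.sum_le_sum_of_subset (Finset.range_subset_range.2 hab)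
  have hSk : S k ≤ ℓ := by have := hS k le_rfl; omega
  have hDle : ∀ j, j ≤ k → D j + j ≤ k := by
    intro j hj
    have := hS j hj
    have := hSmono j k hj
    have := hS k le_rfl
    omega
  set T : ℕ → ℕ := fun v => Nat.findGreatest (fun j => v ≤ D j) k with hTdef
  have hT0 : T 0 = k := by
    have h1' : k ≤ T 0 := Nat.le_findGreatest (P := fun j => 0 ≤ D j) le_rfl (by omega)
    have h2' : T 0 ≤ k := Nat.findGreatest_le k
    omega
  have hTle : ∀ v, T v ≤ k := fun v => Nat.findGreatest_le k
  have hTspec : ∀ v, (∃ j, j ≤ k ∧ v ≤ D j) → v ≤ D (T v) := by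
    rintro v ⟨j, hj, hv⟩
    exact Nat.findGreatest_spec (P := fun j => v ≤ D j) hj hv
  have hTgt : ∀ v j, T v < j → j ≤ k → D j < v := by
    intro v j h h'
    have := Nat.findGreatest_is_greatest (P := fun j => v ≤ D j) h h'
    omega
  have hTval : ∀ v, (∃ j, j ≤ k ∧ v ≤ D j) → D (T v) = v := by
    intro v hw
    have hs := hTspec v hw
    rcases eq_or_lt_of_le (hTle v) with he | hlt
    · rw [he] at hs ⊢; omega
    · have := hTgt v (T v + 1) (by omega) (by omega)
      have := h2 (T v) (by omega)
      omega
  have hTanti : ∀ v v', v ≤ v' → (∃ j, j ≤ k ∧ v' ≤ D j) → T v' ≤ T v := by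
    intro v v' hvv hw
    exact Nat.le_findGreatest (P := fun j => v ≤ D j) (hTle v') (le_trans hvv (hTspec v' hw))
  set B : Finset ℕ := (Finset.Icc 1 k).filter
    (fun v => (∃ j, j ≤ k ∧ v ≤ D j) ∧ ∃ j, j < T v ∧ D j ≤ v) with hBdef
  have hBcard : B.card ≤ ℓ := by
    set c : ℕ → ℕ := fun v => Nat.findGreatest (fun j => D j ≤ v) (T v - 1) with hcdef
    have hc : ∀ v ∈ B, D (c v) ≤ v ∧ v ≤ D (c v + 1) ∧ c v < k := by
      intro v hv
      rw [hBdef, Finset.mem_filter] at hv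
      obtain ⟨hv1, hw, j, hjT, hjD⟩ := hv
      have hT1 : 1 ≤ T v := by omega
      have hspec : D (c v) ≤ v :=
        Nat.findGreatest_spec (P := fun j => D j ≤ v) (m := j) (by omega) hjD
      have hcle : c v ≤ T v - 1 := Nat.findGreatest_le _
      have hck : c v < k := by have := hTle v; omega
      refine ⟨hspec, ?_, hck⟩
      rcases eq_or_lt_of_le (show c v + 1 ≤ T v by omega) with he | hlt
      · rw [he, hTval v hw]
      · have := Nat.findGreatest_is_greatest (P := fun j => D j ≤ v)
          (show c v < c v + 1 by omega) (show c v + 1 ≤ T v - 1 by omega)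
        omega
    have hmaps : ∀ v ∈ B, c v ∈ Finset.range k := by
      intro v hv; exact Finset.mem_range.2 (hc v hv).2.2
    have hfibsum := Finset.card_eq_sum_card_fiberwise hmaps
    have hfib : ∀ j ∈ Finset.range k,
        (B.filter (fun v => c v = j)).card ≤ D (j+1) + 1 - D j := by
      intro j hj
      have hsub : B.filter (fun v => c v = j) ⊆ Finset.Icc (D j) (D (j+1)) := by
        intro v hv
        rw [Finset.mem_filter] at hv
        obtain ⟨hvB, hcv⟩ := hv
        have := hc v hvB
        rw [hcv] at this
        exact Finset.mem_Icc.2 ⟨this.1, this.2.1⟩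
      calc (B.filter (fun v => c v = j)).card ≤ (Finset.Icc (D j) (D (j+1))).card :=
            Finset.card_le_card hsub
        _ = D (j+1) + 1 - D j := Nat.card_Icc _ _
    calc B.card = ∑ j ∈ Finset.range k, (B.filter (fun v => c v = j)).card := hfibsum
      _ ≤ ∑ j ∈ Finset.range k, (D (j+1) + 1 - D j) := Finset.sum_le_sum hfib
      _ = S k := rfl
      _ ≤ ℓ := hSk
  intro i hi
  have hP0 : (∃ j, j ≤ k ∧ 0 ≤ D j) ∧ i ≤ T 0 := ⟨⟨k, le_rfl, by omega⟩, by rw [hT0]; exact hi⟩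
  set v1 : ℕ := Nat.findGreatest (fun v => (∃ j, j ≤ k ∧ v ≤ D j) ∧ i ≤ T v) k with hv1def
  have hPv1 : (∃ j, j ≤ k ∧ v1 ≤ D j) ∧ i ≤ T v1 :=
    Nat.findGreatest_spec (P := fun v => (∃ j, j ≤ k ∧ v ≤ D j) ∧ i ≤ T v) (Nat.zero_le k) hP0
  have hQ0 : ((∃ j, j ≤ k ∧ 0 ≤ D j) ∧ i ≤ T 0) ∧ ∀ j, j < T 0 → 0 < D j :=
    ⟨hP0, fun j hj => by rw [hT0] at hj; exact h5 j hj⟩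
  set v2 : ℕ := Nat.findGreatest
    (fun v => ((∃ j, j ≤ k ∧ v ≤ D j) ∧ i ≤ T v) ∧ ∀ j, j < T v → v < D j) v1 with hv2def
  have hQv2 : ((∃ j, j ≤ k ∧ v2 ≤ D j) ∧ i ≤ T v2) ∧ ∀ j, j < T v2 → v2 < D j :=
    Nat.findGreatest_spec
      (P := fun v => ((∃ j, j ≤ k ∧ v ≤ D j) ∧ i ≤ T v) ∧ ∀ j, j < T v → v < D j)
      (Nat.zero_le v1) hQ0
  have hv2le : v2 ≤ v1 := Nat.findGreatest_le v1
  set m : ℕ := T v2 with hmdef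
  have hmk : m ≤ k := hTle v2
  have hmi : i ≤ m := hQv2.1.2
  have hDm : D m = v2 := hTval v2 hQv2.1.1
  have hleft : ∀ j, j < m → D m < D j := by
    intro j hj; rw [hDm]; exact hQv2.2 j hj
  have hright : ∀ j, m < j → j ≤ k → D j < D m := by
    intro j hj hj'; rw [hDm]; exact hTgt v2 j hj hj'
  have hPmono : ∀ v, v ≤ v1 → (∃ j, j ≤ k ∧ v ≤ D j) ∧ i ≤ T v := by
    intro v hv
    refine ⟨⟨T v1, hTle v1, le_trans hv (hTspec v1 hPv1.1)⟩, ?_⟩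
    exact le_trans hPv1.2 (hTanti v v1 hv hPv1.1)
  have hbadsub : Finset.Icc (v2+1) v1 ⊆ B := by
    intro v hv
    rw [Finset.mem_Icc] at hv
    have hPv := hPmono v hv.2
    have hnQ : ¬ (((∃ j, j ≤ k ∧ v ≤ D j) ∧ i ≤ T v) ∧ ∀ j, j < T v → v < D j) :=
      Nat.findGreatest_is_greatest
        (P := fun v => ((∃ j, j ≤ k ∧ v ≤ D j) ∧ i ≤ T v) ∧ ∀ j, j < T v → v < D j)
        (by omega) hv.2
    have hex : ∃ j, j < T v ∧ D j ≤ v := by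
      by_contra hno
      push_neg at hno
      exact hnQ ⟨hPv, fun j hj => by have := hno j hj; omega⟩
    rw [hBdef, Finset.mem_filter, Finset.mem_Icc]
    have hvk : v ≤ k := by
      obtain ⟨j', hj', hv'⟩ := hPv.1
      have := hDle j' hj'
      omega
    exact ⟨⟨by omega, hvk⟩, hPv.1, hex⟩
  have hv1v2 : v1 ≤ v2 + ℓ := by
    have := Finset.card_le_card hbadsub
    rw [Nat.card_Icc] at this
    have := hBcard
    omega
  have hacct : S m + D 0 = m + v2 := by rw [hS m hmk, hDm]
  have hSm : S m ≤ ℓ := le_trans (hSmono m k hmk) hSk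
  have hm2 : m ≤ i + 2*ℓ := by
    by_cases hw : ∃ j, j ≤ k ∧ v1 + 1 ≤ D j
    · have hv1k : v1 + 1 ≤ k := by
        obtain ⟨j, hj, hv'⟩ := hw
        have := hDle j hj
        omega
      have hnP : ¬ ((∃ j, j ≤ k ∧ (v1+1) ≤ D j) ∧ i ≤ T (v1+1)) :=
        Nat.findGreatest_is_greatest
          (P := fun v => (∃ j, j ≤ k ∧ v ≤ D j) ∧ i ≤ T v) (by omega) hv1k
      have hTlt : T (v1+1) < i := by
        by_contra hge
        exact hnP ⟨hw, by omega⟩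
      have ht1 := hS (T (v1+1)) (hTle _)
      rw [hTval (v1+1) hw] at ht1
      omega
    · push_neg at hw
      have hD0 : D 0 ≤ v1 := by have := hw 0 (by omega); omega
      omega
  exact ⟨m, hmi, hm2, hmk, hleft, hright⟩

end Aux

/-- A `δ`-restless temporal `s`-`z` path of length
`k ≤ d(s,1) + ℓ` visits a distance separator at least every `2ℓ+1` vertices:
for every `i ∈ [0,k]` there is `j ∈ [0,2ℓ]` with `i + j ≤ k` such that
`v_{i+j}` is a distance separator. -/
theorem statement3 {V : Type*} (G : TemporalGraph V) (z s : V) (δ : ℕ) (hδ : 1 ≤ δ)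
    (ℓ k : ℕ) (vs : ℕ → V) (ts : ℕ → ℕ)
    (hP : G.IsRestlessPath δ s z k vs ts)
    (h0 : ts 0 = 1) (hconv : ts (k + 1) = ts k)
    (hk : (k : ℕ∞) ≤ G.dist z s 1 + (ℓ : ℕ∞)) :
    ∀ i ≤ k, ∃ j ≤ 2 * ℓ, i + j ≤ k ∧ G.IsDistSep z k vs ts (i + j) := by
  obtain ⟨hPath, -⟩ := hP
  intro i hi
  rcases Nat.eq_zero_or_pos k with hk0 | hk1
  · subst hk0
    have hi0 : i = 0 := by omega
    subst hi0
    exact ⟨0, by omega, by omega,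
      fun j hj => absurd hj (by omega), fun j hj hj' => absurd (hj.trans_le hj') (by omega)⟩
  · have hfin : ∀ j, j ≤ k → G.dist z (vs j) (ts (j+1)) ≠ ⊤ := fun j hj =>
      ((aux_dist_suffix hPath hj).trans_lt (WithTop.coe_lt_top _)).ne
    set Dn : ℕ → ℕ := fun j => (G.dist z (vs j) (ts (j+1))).toNat with hDndef
    have hcoe : ∀ j, j ≤ k → (Dn j : ℕ∞) = G.dist z (vs j) (ts (j+1)) := fun j hj =>
      ENat.coe_toNat (hfin j hj)
    have h1 : Dn k = 0 := by
      have hzero : G.dist z (vs k) (ts (k+1)) = 0 := by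
        rw [TemporalGraph.dist, if_pos hPath.2.1]
      show (G.dist z (vs k) (ts (k+1))).toNat = 0
      rw [hzero]
      rfl
    have h2 : ∀ j, j < k → Dn j ≤ Dn (j+1) + 1 := by
      intro j hj
      have hstep := aux_dist_step hPath hconv hj
      rw [← hcoe j (by omega), ← hcoe (j+1) (by omega)] at hstep
      exact_mod_cast hstep
    have h5 : ∀ j, j < k → 1 ≤ Dn j := by
      intro j hj
      by_contra hcon
      have hDn0 : Dn j = 0 := by omega
      have hd0 : G.dist z (vs j) (ts (j+1)) = 0 := by
        rw [← hcoe j (by omega), hDn0]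
        rfl
      obtain ⟨m, vs', ts', hp, ht, heq⟩ := aux_dist_spec (hfin j (by omega))
      rw [hd0] at heq
      have hm0 : m = 0 := by exact_mod_cast heq.symm
      subst hm0
      have hjz : vs j = z := by
        have h' := hp.2.1
        rwa [hp.1] at h'
      have hne := hPath.2.2.1 j k (by omega) le_rfl (by omega)
      rw [hPath.2.1] at hne
      exact hne hjz
    have h3 : k ≤ Dn 0 + ℓ := by
      have hts1 : 1 ≤ ts 1 := (G.time_mem _ _ (hPath.2.2.2.1 1 le_rfl hk1)).1
      have hds : G.dist z s 1 ≤ G.dist z (vs 0) (ts (0+1)) := by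
        rw [hPath.1]
        exact aux_dist_mono hts1
      have hχ : (k : ℕ∞) ≤ ((Dn 0 + ℓ : ℕ) : ℕ∞) := by
        push_cast
        rw [hcoe 0 (by omega)]
        exact le_trans hk (add_le_add_left hds _)
      exact_mod_cast hχ
    obtain ⟨m, hmi, hm2, hmk, hleft, hright⟩ := sep_core Dn k ℓ h1 h2 h3 h5 i hi
    refine ⟨m - i, by omega, by omega, ?_⟩
    have him : i + (m - i) = m := by omega
    rw [him]
    refine ⟨?_, ?_⟩
    · intro j hj
      rw [← hcoe m hmk, ← hcoe j (by omega)]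
      exact_mod_cast hleft j hj
    · intro j hj hj'
      rw [← hcoe m hmk, ← hcoe j hj']
      exact_mod_cast hright j hj hj'
end
end

section
/- Let G be a temporal graph with destination vertex z and δ ∈ ℕ, and let (v,t) and (u,t') be vertex appearances with t ≤ t' and d(u,t') < d(v,t) < ∞. Then every vertex that belongs to both V(G^{v,t}) and V(G_{v,t}^{u,t'}) is equal to v; that is, V(G^{v,t}) ∩ V(G_{v,t}^{u,t'}) ⊆ {v}. -/
attribute [local instance] Classical.propDecidable

noncomputable section

open TemporalGraph

lemma dist_mono' {V : Type*} (G : TemporalGraph V) (z x : V) {s s' : ℕ} (h : s ≤ s') :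
    G.dist z x s ≤ G.dist z x s' := by
  unfold TemporalGraph.dist
  split_ifs with h1
  · exact le_refl _
  · apply sInf_le_sInf
    rintro a ⟨m, vs, ts, hp, hts, rfl⟩
    exact ⟨m, vs, ts, hp, le_trans h hts, rfl⟩

lemma memB {V : Type*} (G : TemporalGraph V) (z v : V) (δ t : ℕ) {x : V}
    (hx : x ∈ (G.SubB z δ v t).vertexSet) :
    x = v ∨ ∃ s1, s1 ≤ t ∧ G.dist z v t < G.dist z x s1 := by
  obtain ⟨s, e, he, hxe⟩ := hx
  rcases he with ⟨-, a, b, rfl, ha, hb⟩ | ⟨-, -, a, rfl, ha⟩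
  · rcases Sym2.mem_iff.1 hxe with rfl | rfl
    · exact Or.inr ⟨s, ha.2.2, ha.1⟩
    · exact Or.inr ⟨s, hb.2.2, hb.1⟩
  · rcases Sym2.mem_iff.1 hxe with rfl | rfl
    · exact Or.inr ⟨s, ha.2.2, ha.1⟩
    · exact Or.inl rfl

lemma memAB {V : Type*} (G : TemporalGraph V) (z v u : V) (δ t t' : ℕ) (htt : t ≤ t')
    (hlt : G.dist z u t' < G.dist z v t) {x : V}
    (hx : x ∈ (G.SubAB z δ v t u t').vertexSet) :
    x = v ∨ ∃ s2, t ≤ s2 ∧ G.dist z x s2 < G.dist z v t := by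
  obtain ⟨s, e, he, hxe⟩ := hx
  rcases he with ⟨-, a, b, rfl, ha, hb⟩ | ⟨-, rfl, a, rfl, ha⟩ | ⟨-, -, a, rfl, ha⟩
  · rcases Sym2.mem_iff.1 hxe with rfl | rfl
    · exact Or.inr ⟨s, ha.2.2.1, ha.2.1⟩
    · exact Or.inr ⟨s, hb.2.2.1, hb.2.1⟩
  · rcases Sym2.mem_iff.1 hxe with rfl | rfl
    · exact Or.inl rfl
    · exact Or.inr ⟨s, ha.2.2.1, ha.2.1⟩
  · rcases Sym2.mem_iff.1 hxe with rfl | rfl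
    · rcases ha with ha | ⟨rfl, rfl⟩
      · exact Or.inr ⟨s, ha.2.2.1, ha.2.1⟩
      · exact Or.inl rfl
    · exact Or.inr ⟨t', htt, hlt⟩

/-- For vertex appearances `(v,t)` and `(u,t')` with `t ≤ t'`
and `d(u,t') < d(v,t) < ∞`, the vertex sets of `G^{v,t}` and `G_{v,t}^{u,t'}`
intersect in at most the vertex `v`. -/
theorem statement7 {V : Type*} (G : TemporalGraph V) (z : V) (δ : ℕ) (hδ : 1 ≤ δ)
    (v : V) (t : ℕ) (u : V) (t' : ℕ) (htt : t ≤ t')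
    (hlt : G.dist z u t' < G.dist z v t) (hfin : G.dist z v t < ⊤) :
    (G.SubB z δ v t).vertexSet ∩ (G.SubAB z δ v t u t').vertexSet ⊆ {v} := by
  rintro x ⟨hB, hAB⟩
  rcases memB G z v δ t hB with rfl | ⟨s1, hs1, h1⟩
  · rfl
  rcases memAB G z v u δ t t' htt hlt hAB with rfl | ⟨s2, hs2, h2⟩
  · rfl
  exact absurd (dist_mono' G z x (le_trans hs1 hs2)) (not_le.2 (h2.trans h1))
end
end

section
/- Let G be a temporal graph with destination vertex z, δ ∈ ℕ, and let (a,t) and (b,t') be vertex appearances with t ≤ t' and a ≠ b. Then: (i) every temporal a-b path in the temporal graph G_{a,t}^{b,t'} departs at time exactly t and arrives at a time in [t'−δ, t']; and (ii) every temporal path in the temporal graph G^{b,t'} that ends at b arrives at a time in [t'−δ, t']. -/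
attribute [local instance] Classical.propDecidable

noncomputable section

open TemporalGraph

/-- Distance is monotone nondecreasing in the departure time bound. -/
lemma dist_mono_aux {V : Type*} (G : TemporalGraph V) (z v : V) {t₁ t₂ : ℕ}
    (h : t₁ ≤ t₂) : G.dist z v t₁ ≤ G.dist z v t₂ := by
  unfold TemporalGraph.dist
  split
  · exact le_refl _
  · apply sInf_le_sInf
    rintro x ⟨m, vs, ts, hp, ht, hx⟩
    exact ⟨m, vs, ts, hp, h.trans ht, hx⟩

/-- (i) Every temporal `a`-`b` path in `G_{a,t}^{b,t'}`
departs at time exactly `t` and arrives at a time in `[t'-δ, t']`;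
(ii) every temporal path in `G^{b,t'}` that ends at `b` arrives at a time in
`[t'-δ, t']`. -/
theorem statement13 {V : Type*} (G : TemporalGraph V) (z : V) (δ : ℕ) (hδ : 1 ≤ δ)
    (a : V) (t : ℕ) (b : V) (t' : ℕ) (htt : t ≤ t') (hab : a ≠ b) :
    (∀ m vs ts, (G.SubAB z δ a t b t').IsPath a b m vs ts →
      ts 1 = t ∧ t' ≤ ts m + δ ∧ ts m ≤ t') ∧
    (∀ w m vs ts, (G.SubB z δ b t').IsPath w b m vs ts → 1 ≤ m →
      t' ≤ ts m + δ ∧ ts m ≤ t') := by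
  -- (a, u) is never in AreaAB
  have hanotin : ∀ u, (a, u) ∉ G.AreaAB z a t b t' := by
    rintro u ⟨h1, h2, h3, h4⟩
    exact absurd (dist_mono_aux G z a h3) (not_le.mpr h2)
  -- (b, u) is never in AreaAB
  have hbnotin : ∀ u, (b, u) ∉ G.AreaAB z a t b t' := by
    rintro u ⟨h1, h2, h3, h4⟩
    exact absurd (dist_mono_aux G z b h4) (not_le.mpr h1)
  -- (b, u) is never in AreaB
  have hbnotinB : ∀ u, (b, u) ∉ G.AreaB z b t' := by
    rintro u ⟨h1, h2, h3⟩
    exact absurd (dist_mono_aux G z b h3) (not_le.mpr h1)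
  constructor
  · intro m vs ts hp
    obtain ⟨h0, hm, hdist, hE, -⟩ := hp
    have hm1 : 1 ≤ m := by
      by_contra h
      have : m = 0 := by omega
      exact hab (h0 ▸ this ▸ hm)
    -- first edge
    have hfirst : ts 1 = t := by
      have he := hE 1 le_rfl hm1
      simp only [TemporalGraph.SubAB] at he
      rcases he with ⟨-, x, y, hexy, hx, hy⟩ | ⟨-, hu, -⟩ | ⟨-, -, x, hex, hor⟩
      · rw [show (1 : ℕ) - 1 = 0 from rfl, h0] at hexy
        rcases Sym2.eq_iff.mp hexy with ⟨rfl, -⟩ | ⟨rfl, -⟩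
        · exact absurd hx (hanotin _)
        · exact absurd hy (hanotin _)
      · exact hu
      · rw [show (1 : ℕ) - 1 = 0 from rfl, h0] at hex
        rcases Sym2.eq_iff.mp hex with ⟨rfl, -⟩ | ⟨hb, -⟩
        · rcases hor with hmem | ⟨-, ht1⟩
          · exact absurd hmem (hanotin _)
          · exact ht1
        · exact absurd hb hab
    refine ⟨hfirst, ?_⟩
    -- last edge
    have he := hE m hm1 le_rfl
    simp only [TemporalGraph.SubAB] at he
    have hmne : vs (m - 1) ≠ vs m := hdist (m - 1) m (by omega) le_rfl (by omega)
    rcases he with ⟨-, x, y, hexy, hx, hy⟩ | ⟨-, hu, x, hex, hmem⟩ |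
        ⟨-, hd, x, hex, hor⟩
    · rw [hm] at hexy
      rcases Sym2.eq_iff.mp hexy with ⟨-, rfl⟩ | ⟨-, rfl⟩
      · exact absurd hy (hbnotin _)
      · exact absurd hx (hbnotin _)
    · rw [hm] at hex
      rcases Sym2.eq_iff.mp hex with ⟨-, rfl⟩ | ⟨-, hba⟩
      · exact absurd hmem (hbnotin _)
      · exact absurd hba.symm hab
    · refine ⟨hd, ?_⟩
      rw [hm] at hex
      rcases Sym2.eq_iff.mp hex with ⟨hx1, -⟩ | ⟨hx1, hbx⟩
      · rcases hor with hmem | ⟨-, htm⟩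
        · exact hmem.2.2.2
        · omega
      · exact absurd (hm ▸ hx1 : vs (m - 1) = vs m) hmne
  · intro w m vs ts hp hm1
    obtain ⟨h0, hm, hdist, hE, -⟩ := hp
    have he := hE m hm1 le_rfl
    simp only [TemporalGraph.SubB] at he
    have hmne : vs (m - 1) ≠ vs m := hdist (m - 1) m (by omega) le_rfl (by omega)
    rcases he with ⟨-, x, y, hexy, hx, hy⟩ | ⟨-, hd, x, hex, hmem⟩
    · rw [hm] at hexy
      rcases Sym2.eq_iff.mp hexy with ⟨-, rfl⟩ | ⟨-, rfl⟩
      · exact absurd hy (hbnotinB _)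
      · exact absurd hx (hbnotinB _)
    · refine ⟨hd, ?_⟩
      rw [hm] at hex
      rcases Sym2.eq_iff.mp hex with ⟨hx1, -⟩ | ⟨hx1, hbx⟩
      · exact hmem.2.2
      · exact absurd (hm ▸ hx1 : vs (m - 1) = vs m) hmne
end
end

section
/- Let G = (V,(E_i)_{i=1}^τ) be a temporal graph with destination vertex z, and let 𝒱 := {(v,t) ∈ V × [τ] : v ∈ e for some e ∈ E_t} be the set of non-isolated vertex appearances. Define the arc-weighted directed graph D with vertex set {z} ∪ {v_t : (v,t) ∈ 𝒱} and arcs: for each t ∈ [τ] and each edge {v,u} ∈ E_t, the arcs (v_t,u_t) and (u_t,v_t) of weight 1; for each vertex v and each pair of times t_1 < t_2 with (v,t_1),(v,t_2) ∈ 𝒱 and t_2 = min{t : (v,t) ∈ 𝒱, t > t_1}, the arc (v_{t_2}, v_{t_1}) of weight 0; and, if (z,t') ∈ 𝒱 for some t', the arc (z, z_t) of weight 0 where t = max{t' : (z,t') ∈ 𝒱}. Then for every (v,t) ∈ 𝒱, the minimum total arc weight of a directed z-v_t path in D equals d(v,t) (where this minimum is ∞ if v_t is not reachable from z in D). -/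
attribute [local instance] Classical.propDecidable

noncomputable section

open TemporalGraph

section WalkHelpers

variable {α β : Type*}

lemma walk_time_mono (R : α → α → ℕ → Prop) (time : α → ℕ)
    (hmono : ∀ a b c, R a b c → time a ≤ time b)
    {n : ℕ} {w : ℕ → α} {wt : ℕ → ℕ}
    (harc : ∀ i, i < n → R (w i) (w (i + 1)) (wt i)) :
    ∀ i j, i ≤ j → j ≤ n → time (w i) ≤ time (w j) := by
  intro i j hij hjn
  obtain ⟨d, rfl⟩ := Nat.exists_eq_add_of_le hij
  clear hij
  induction d with
  | zero => exact le_refl _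
  | succ d ih =>
      have h1 : time (w i) ≤ time (w (i + d)) := ih (by omega)
      have h2 := hmono _ _ _ (harc (i + d) (by omega))
      calc time (w i) ≤ time (w (i + d)) := h1
        _ ≤ time (w (i + d + 1)) := h2
        _ = time (w (i + (d + 1))) := by ring_nf

lemma walk_splice (R : α → α → ℕ → Prop) (f : α → β) (time : α → ℕ)
    (hmono : ∀ a b c, R a b c → time a ≤ time b)
    (compat : ∀ a a' b c, f a = f a' → time a ≤ time a' → R a' b c → R a b c) :
    ∀ (n : ℕ) (w : ℕ → α) (wt : ℕ → ℕ),
      (∀ i, i < n → R (w i) (w (i + 1)) (wt i)) →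
      ∃ (n' : ℕ) (w' : ℕ → α) (wt' : ℕ → ℕ),
        w' 0 = w 0 ∧ f (w' n') = f (w n) ∧
        (∀ i j, i ≤ n' → j ≤ n' → i ≠ j → f (w' i) ≠ f (w' j)) ∧
        (∀ i, i < n' → R (w' i) (w' (i + 1)) (wt' i)) ∧
        ∑ i ∈ Finset.range n', wt' i ≤ ∑ i ∈ Finset.range n, wt i := by
  intro n
  induction n using Nat.strong_induction_on with
  | _ n IH =>
  intro w wt harc
  by_cases hinj : ∀ i j, i ≤ n → j ≤ n → i ≠ j → f (w i) ≠ f (w j)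
  · exact ⟨n, w, wt, rfl, rfl, hinj, harc, le_refl _⟩
  · push_neg at hinj
    obtain ⟨i, j, hin, hjn, hij, hfij⟩ := hinj
    wlog hlt : i < j generalizing i j
    · exact this j i hjn hin hij.symm hfij.symm (by omega)
    set d := j - i with hd
    have hd1 : 1 ≤ d := by omega
    set n'' := n - d with hn''
    set w'' : ℕ → α := fun k => if k ≤ i then w k else w (k + d) with hw''
    set wt'' : ℕ → ℕ := fun k => if k < i then wt k else wt (k + d) with hwt''
    have harc'' : ∀ k, k < n'' → R (w'' k) (w'' (k + 1)) (wt'' k) := by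
      intro k hk
      rcases lt_trichotomy k i with h | h | h
      · have e1 : w'' k = w k := by simp [hw'', h.le]
        have e2 : w'' (k + 1) = w (k + 1) := by simp [hw'', (by omega : k + 1 ≤ i)]
        have e3 : wt'' k = wt k := by simp [hwt'', h]
        rw [e1, e2, e3]; exact harc k (by omega)
      · subst h
        have e1 : w'' k = w k := by simp [hw'']
        have e2 : w'' (k + 1) = w (j + 1) := by
          simp only [hw'', if_neg (by omega : ¬ k + 1 ≤ k)]
          congr 1; omega
        have e3 : wt'' k = wt j := by
          simp only [hwt'', if_neg (by omega : ¬ k < k)]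
          congr 1; omega
        rw [e1, e2, e3]
        exact compat (w k) (w j) _ _ hfij
          (walk_time_mono R time hmono harc k j hlt.le hjn) (harc j (by omega))
      · have e1 : w'' k = w (k + d) := by simp only [hw'', if_neg (by omega : ¬ k ≤ i)]
        have e2 : w'' (k + 1) = w (k + d + 1) := by
          simp only [hw'', if_neg (by omega : ¬ k + 1 ≤ i)]
          congr 1; omega
        have e3 : wt'' k = wt (k + d) := by simp only [hwt'', if_neg (by omega : ¬ k < i)]
        rw [e1, e2, e3]; exact harc (k + d) (by omega)
    have hend : f (w'' n'') = f (w n) := by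
      by_cases h : n'' ≤ i
      · have hni : n'' = i := le_antisymm h (by omega)
        have hjn' : j = n := by omega
        have : w'' n'' = w i := by simp [hw'', hni]
        rw [this, hfij, hjn']
      · have e : w'' n'' = w (n'' + d) := by simp [hw'', h]
        have : n'' + d = n := by omega
        rw [e, this]
    have hsum : ∑ k ∈ Finset.range n'', wt'' k ≤ ∑ k ∈ Finset.range n, wt k := by
      have h1 : n'' = i + (n - j) := by omega
      have h2 : n = j + (n - j) := by omega
      rw [h1, Finset.sum_range_add]
      conv_rhs => rw [h2, Finset.sum_range_add]
      have e1 : ∑ k ∈ Finset.range i, wt'' k = ∑ k ∈ Finset.range i, wt k := by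
        apply Finset.sum_congr rfl
        intro k hk
        simp [hwt'', Finset.mem_range.mp hk]
      have e2 : ∑ k ∈ Finset.range (n - j), wt'' (i + k)
          = ∑ k ∈ Finset.range (n - j), wt (j + k) := by
        apply Finset.sum_congr rfl
        intro k hk
        simp only [hwt'', if_neg (by omega : ¬ i + k < i)]
        congr 1; omega
      rw [e1, e2]
      have : ∑ k ∈ Finset.range i, wt k ≤ ∑ k ∈ Finset.range j, wt k :=
        Finset.sum_le_sum_of_subset (Finset.range_subset_range.mpr hlt.le)
      omega
    obtain ⟨n', w', wt', H0, Hend, Hinj, Harc, Hsum⟩ :=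
      IH n'' (by omega) w'' wt'' harc''
    refine ⟨n', w', wt', ?_, ?_, Hinj, Harc, le_trans Hsum hsum⟩
    · rw [H0]; simp [hw'']
    · rw [Hend, hend]

lemma walk_concat (R : α → α → ℕ → Prop)
    {n1 n2 : ℕ} {w1 w2 : ℕ → α} {wt1 wt2 : ℕ → ℕ}
    (h1 : ∀ i, i < n1 → R (w1 i) (w1 (i + 1)) (wt1 i))
    (h2 : ∀ i, i < n2 → R (w2 i) (w2 (i + 1)) (wt2 i))
    (hj : w1 n1 = w2 0) :
    ∃ (w : ℕ → α) (wt : ℕ → ℕ), w 0 = w1 0 ∧ w (n1 + n2) = w2 n2 ∧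
      (∀ i, i < n1 + n2 → R (w i) (w (i + 1)) (wt i)) ∧
      ∑ i ∈ Finset.range (n1 + n2), wt i
        = ∑ i ∈ Finset.range n1, wt1 i + ∑ i ∈ Finset.range n2, wt2 i := by
  refine ⟨fun k => if k ≤ n1 then w1 k else w2 (k - n1),
          fun k => if k < n1 then wt1 k else wt2 (k - n1), by simp, ?_, ?_, ?_⟩
  · rcases Nat.eq_zero_or_pos n2 with h | h
    · simp [h, hj]
    · show (if n1 + n2 ≤ n1 then w1 (n1 + n2) else w2 (n1 + n2 - n1)) = w2 n2
      rw [if_neg (by omega : ¬ n1 + n2 ≤ n1)]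
      congr 1
      omega
  · intro k hk
    rcases lt_trichotomy k n1 with h | h | h
    · simp only [if_pos h.le, if_pos (by omega : k + 1 ≤ n1), if_pos h]
      exact h1 k h
    · subst h
      simp only [if_pos (le_refl k), if_neg (by omega : ¬ k + 1 ≤ k),
        if_neg (by omega : ¬ k < k), Nat.add_sub_cancel_left, hj]
      simpa using h2 0 (by omega)
    · simp only [if_neg (by omega : ¬ k ≤ n1), if_neg (by omega : ¬ k + 1 ≤ n1),
        if_neg (by omega : ¬ k < n1)]
      have e1 : k + 1 - n1 = (k - n1) + 1 := by omega
      rw [e1]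
      exact h2 (k - n1) (by omega)
  · rw [Finset.sum_range_add]
    congr 1
    · exact Finset.sum_congr rfl fun k hk => if_pos (Finset.mem_range.mp hk)
    · refine Finset.sum_congr rfl fun k hk => ?_
      simp only [if_neg (by omega : ¬ n1 + k < n1), Nat.add_sub_cancel_left]

lemma walk_single (R : α → α → ℕ → Prop) {a b : α} {c : ℕ} (h : R a b c) :
    ∃ (w : ℕ → α) (wt : ℕ → ℕ), w 0 = a ∧ w 1 = b ∧
      (∀ i, i < 1 → R (w i) (w (i + 1)) (wt i)) ∧
      ∑ i ∈ Finset.range 1, wt i = c := by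
  refine ⟨fun k => if k = 0 then a else b, fun _ => c, by simp, by simp, ?_, by simp⟩
  intro i hi
  interval_cases i
  simpa using h

end WalkHelpers

section TGHelpers

variable {V : Type*}

/-- One step of a temporal walk towards the destination, in pair encoding. -/
def Rg (G : TemporalGraph V) : V × ℕ → V × ℕ → ℕ → Prop :=
  fun a b c => G.E b.2 s(a.1, b.1) ∧ a.2 ≤ b.2 ∧ c = 1

lemma dist_le_of_Rg_walk (G : TemporalGraph V) (z v : V) (t : ℕ)
    {n : ℕ} {p : ℕ → V × ℕ} {wt : ℕ → ℕ}
    (h0 : p 0 = (v, t)) (hend : (p n).1 = z)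
    (harc : ∀ i, i < n → Rg G (p i) (p (i + 1)) (wt i)) :
    G.dist z v t ≤ (n : ℕ∞) := by
  by_cases hvz : v = z
  · simp [TemporalGraph.dist, hvz]
  obtain ⟨n', p', wt', H0, Hend, Hinj, Harc, Hsum⟩ :=
    walk_splice (Rg G) Prod.fst Prod.snd
      (fun a b c h => h.2.1)
      (fun a a' b c hf ht h =>
        ⟨by rw [show a.1 = a'.1 from hf]; exact h.1, le_trans ht h.2.1, h.2.2⟩)
      n p wt harc
  rw [h0] at H0
  rw [hend] at Hend
  have hn' : n' ≠ 0 := by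
    intro h
    subst h
    rw [H0] at Hend
    exact hvz Hend
  have hwt1 : ∀ i, i < n → wt i = 1 := fun i hi => (harc i hi).2.2
  have hwt'1 : ∀ i, i < n' → wt' i = 1 := fun i hi => (Harc i hi).2.2
  have hsum1 : ∑ i ∈ Finset.range n, wt i = n := by
    rw [Finset.sum_congr rfl fun i hi => hwt1 i (Finset.mem_range.mp hi)]
    simp
  have hsum2 : ∑ i ∈ Finset.range n', wt' i = n' := by
    rw [Finset.sum_congr rfl fun i hi => hwt'1 i (Finset.mem_range.mp hi)]
    simp
  have hnn : n' ≤ n := by omega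
  have hpath : G.IsPath v z n' (fun i => (p' i).1) (fun i => (p' i).2) := by
    refine ⟨by simp [H0], Hend, Hinj, ?_, ?_⟩
    · intro i h1 h2
      have := Harc (i - 1) (by omega)
      have e : i - 1 + 1 = i := by omega
      rw [e] at this
      exact this.1
    · intro i h1 h2
      exact (Harc i (by omega)).2.1
  have hdep : t ≤ (p' 1).2 := by
    have := (Harc 0 (by omega)).2.1
    rwa [H0] at this
  calc G.dist z v t ≤ (n' : ℕ∞) := by
        rw [TemporalGraph.dist, if_neg hvz]
        exact sInf_le ⟨n', _, _, hpath, hdep, rfl⟩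
    _ ≤ (n : ℕ∞) := by exact_mod_cast hnn

lemma nonisolated_time_le (G : TemporalGraph V) {v : V} {s : ℕ}
    (h : (v, s) ∈ G.NonIsolated) : s ≤ G.tau := by
  obtain ⟨e, he, -⟩ := h
  exact (G.time_mem s e he).2

lemma wait_chain (G : TemporalGraph V) (z v : V) :
    ∀ ta tb, tb ≤ ta → (v, ta) ∈ G.NonIsolated → (v, tb) ∈ G.NonIsolated →
    ∃ (n : ℕ) (w : ℕ → Unit ⊕ V × ℕ) (wt : ℕ → ℕ),
      w 0 = Sum.inr (v, ta) ∧ w n = Sum.inr (v, tb) ∧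
      (∀ i, i < n → TemporalGraph.DArc G z (w i) (w (i + 1)) (wt i)) ∧
      ∑ i ∈ Finset.range n, wt i = 0 := by
  intro ta
  induction ta using Nat.strong_induction_on with
  | _ ta IH =>
  intro tb hle hA hB
  by_cases heq : ta = tb
  · subst heq
    exact ⟨0, fun _ => Sum.inr (v, ta), fun _ => 0, rfl, rfl, by omega, by simp⟩
  · have hlt : tb < ta := lt_of_le_of_ne hle (Ne.symm heq)
    set s0 := Nat.findGreatest (fun s => tb ≤ s ∧ (v, s) ∈ G.NonIsolated) (ta - 1) with hs0
    have hP : tb ≤ tb ∧ (v, tb) ∈ G.NonIsolated := ⟨le_refl _, hB⟩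
    have hs0spec : tb ≤ s0 ∧ (v, s0) ∈ G.NonIsolated := by
      rw [hs0]
      exact Nat.findGreatest_spec (P := fun s => tb ≤ s ∧ (v, s) ∈ G.NonIsolated)
        (by omega : tb ≤ ta - 1) hP
    have hs0le : s0 ≤ ta - 1 := Nat.findGreatest_le _
    have harc1 : TemporalGraph.DArc G z (Sum.inr (v, ta)) (Sum.inr (v, s0)) 0 := by
      refine Or.inr ⟨rfl, rfl, hA, hs0spec.2, by omega, ?_⟩
      intro t'' h1 h2 hni
      have : t'' ≤ s0 := by
        rw [hs0]
        exact Nat.le_findGreatest (P := fun s => tb ≤ s ∧ (v, s) ∈ G.NonIsolated)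
          (by omega) ⟨by omega, hni⟩
      omega
    obtain ⟨w1, wt1, e0, e1, harcs1, hsum1⟩ := walk_single _ harc1
    obtain ⟨n2, w2, wt2, f0, f1, harcs2, hsum2⟩ :=
      IH s0 (by omega) tb hs0spec.1 hs0spec.2 hB
    obtain ⟨w, wt, g0, g1, garc, gsum⟩ := walk_concat _ harcs1 harcs2 (by rw [e1, f0])
    exact ⟨1 + n2, w, wt, by rw [g0, e0], by rw [g1, f1], garc, by omega⟩

lemma dMinWeight_le_of_walk (G : TemporalGraph V) (z v : V) (t : ℕ)
    {n : ℕ} {w : ℕ → Unit ⊕ V × ℕ} {wt : ℕ → ℕ}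
    (h0 : w 0 = Sum.inl ()) (hn : w n = Sum.inr (v, t))
    (harc : ∀ i, i < n → TemporalGraph.DArc G z (w i) (w (i + 1)) (wt i)) :
    G.dMinWeight z v t ≤ ((∑ i ∈ Finset.range n, wt i : ℕ) : ℕ∞) := by
  obtain ⟨n', w', wt', H0, Hend, Hinj, Harc, Hsum⟩ :=
    walk_splice (TemporalGraph.DArc G z) id (fun _ => 0)
      (fun _ _ _ _ => le_refl _)
      (fun a a' b c hf _ h => by rw [show a = a' from hf]; exact h)
      n w wt harc
  have hend' : w' n' = Sum.inr (v, t) := by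
    have : id (w' n') = id (w n) := Hend
    simpa [hn] using this
  have hinj' : ∀ i j, i ≤ n' → j ≤ n' → i ≠ j → w' i ≠ w' j := by
    intro i j hi hj hij
    exact Hinj i j hi hj hij
  calc G.dMinWeight z v t
      ≤ ((∑ i ∈ Finset.range n', wt' i : ℕ) : ℕ∞) := by
        apply sInf_le
        refine ⟨n', w', wt', H0.trans h0, hend', hinj', Harc, ?_⟩
        push_cast
        rfl
    _ ≤ ((∑ i ∈ Finset.range n, wt i : ℕ) : ℕ∞) := by exact_mod_cast Hsum

end TGHelpers

section MainLemmas

variable {V : Type*}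

lemma dist_le_dMinWeight (G : TemporalGraph V) (z v : V) (t : ℕ) :
    G.dist z v t ≤ G.dMinWeight z v t := by
  rw [TemporalGraph.dMinWeight]
  apply le_sInf
  rintro x ⟨n, w, wt, h0, hn, -, harc, rfl⟩
  have key : ∀ i, 1 ≤ i → i ≤ n → ∃ (u : V) (s : ℕ) (m : ℕ) (p : ℕ → V × ℕ),
      w i = Sum.inr (u, s) ∧ p 0 = (u, s) ∧ (p m).1 = z ∧
      (∀ k, k < m → Rg G (p k) (p (k + 1)) 1) ∧ m = ∑ j ∈ Finset.range i, wt j := by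
    intro i h1
    induction i, h1 using Nat.le_induction with
    | base =>
      intro hin
      have arc0 := harc 0 (by omega)
      rw [h0] at arc0
      rcases hw : w 1 with x | ⟨u, s⟩
      · rw [hw] at arc0
        exact arc0.elim
      · rw [hw] at arc0
        obtain ⟨hwt0, huz, hni, -⟩ := arc0
        exact ⟨u, s, 0, fun _ => (u, s), rfl, rfl, huz, by omega,
          by rw [Finset.sum_range_one, hwt0]⟩
    | succ i hi ih =>
      intro hin
      obtain ⟨u, s, m, p, hwi, hp0, hpz, hparc, hm⟩ := ih (by omega)
      have arc := harc i (by omega)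
      rw [hwi] at arc
      rcases hw : w (i + 1) with x | ⟨u', s'⟩
      · rw [hw] at arc
        exact arc.elim
      · rw [hw] at arc
        rcases arc with ⟨hwt, hss, hne, hE⟩ | ⟨hwt, huu, hniA, hniB, hlt, -⟩
        · -- edge arc
          refine ⟨u', s', m + 1, fun k => if k = 0 then (u', s') else p (k - 1), rfl, rfl,
            ?_, ?_, ?_⟩
          · show (if m + 1 = 0 then (u', s') else p (m + 1 - 1)).1 = z
            rw [if_neg (by omega : ¬ m + 1 = 0)]
            simpa using hpz
          · intro k hk
            rcases Nat.eq_zero_or_pos k with h | h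
            · subst h
              show Rg G (u', s') (if 0 + 1 = 0 then (u', s') else p (0 + 1 - 1)) 1
              rw [if_neg (by omega : ¬ 0 + 1 = 0)]
              simp only [Nat.add_sub_cancel]
              rw [hp0]
              refine ⟨?_, ?_, rfl⟩
              · show G.E s s(u', u)
                rw [Sym2.eq_swap]
                rw [hss]
                rwa [← hss]
              · exact le_of_eq hss.symm
            · show Rg G (if k = 0 then (u', s') else p (k - 1))
                (if k + 1 = 0 then (u', s') else p (k + 1 - 1)) 1
              rw [if_neg (by omega : ¬ k = 0), if_neg (by omega : ¬ k + 1 = 0)]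
              have e : k + 1 - 1 = (k - 1) + 1 := by omega
              rw [e]
              exact hparc (k - 1) (by omega)
          · rw [Finset.sum_range_succ, ← hm, hwt]
        · -- waiting arc
          subst huu
          refine ⟨u, s', m, fun k => if k = 0 then (u, s') else p k, rfl, rfl, ?_, ?_, ?_⟩
          · show (if m = 0 then (u, s') else p m).1 = z
            rcases Nat.eq_zero_or_pos m with h | h
            · subst h
              rw [if_pos rfl]
              show u = z
              rw [← hpz, hp0]
            · rw [if_neg (by omega : ¬ m = 0)]
              exact hpz
          · intro k hk
            rcases Nat.eq_zero_or_pos k with h | h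
            · subst h
              show Rg G (u, s') (if 0 + 1 = 0 then (u, s') else p (0 + 1)) 1
              rw [if_neg (by omega : ¬ 0 + 1 = 0)]
              have h01 := hparc 0 hk
              rw [hp0] at h01
              exact ⟨h01.1, by have := h01.2.1; omega, rfl⟩
            · show Rg G (if k = 0 then (u, s') else p k)
                (if k + 1 = 0 then (u, s') else p (k + 1)) 1
              rw [if_neg (by omega : ¬ k = 0), if_neg (by omega : ¬ k + 1 = 0)]
              exact hparc k hk
          · rw [Finset.sum_range_succ, ← hm, hwt, Nat.add_zero]
  have hn1 : 1 ≤ n := by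
    rcases Nat.eq_zero_or_pos n with h | h
    · exfalso
      rw [h, h0] at hn
      exact absurd hn (by simp)
    · exact h
  obtain ⟨u, s, m, p, hwi, hp0, hpz, hparc, hm⟩ := key n hn1 (le_refl n)
  rw [hn] at hwi
  obtain ⟨huv, hts⟩ := Prod.mk.inj (Sum.inr.inj hwi)
  rw [← huv, ← hts] at hp0
  have hdle := dist_le_of_Rg_walk G z v t (wt := fun _ => 1) hp0 hpz hparc
  have hx : (∑ i ∈ Finset.range n, (wt i : ℕ∞)) = (m : ℕ∞) := by
    rw [hm]
    push_cast
    rfl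
  rw [hx]
  exact hdle

lemma dMinWeight_le_dist (G : TemporalGraph V) (z v : V) (t : ℕ)
    (hvt : (v, t) ∈ G.NonIsolated) :
    G.dMinWeight z v t ≤ G.dist z v t := by
  set tmax := Nat.findGreatest (fun s => (z, s) ∈ G.NonIsolated) G.tau with htmax
  by_cases hvz : v = z
  · subst hvz
    rw [TemporalGraph.dist, if_pos rfl]
    have httau : t ≤ G.tau := nonisolated_time_le G hvt
    have hmaxni : (v, tmax) ∈ G.NonIsolated := by
      rw [htmax]
      exact Nat.findGreatest_spec (P := fun s => (v, s) ∈ G.NonIsolated) httau hvt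
    have hmax : ∀ t'', (v, t'') ∈ G.NonIsolated → t'' ≤ tmax := by
      intro t'' h
      rw [htmax]
      exact Nat.le_findGreatest (nonisolated_time_le G h) h
    have htle : t ≤ tmax := hmax t hvt
    have arc0 : TemporalGraph.DArc G v (Sum.inl ()) (Sum.inr (v, tmax)) 0 :=
      ⟨rfl, rfl, hmaxni, hmax⟩
    obtain ⟨w1, wt1, e0, e1, ha1, hs1⟩ := walk_single _ arc0
    obtain ⟨n2, w2, wt2, f0, f1, ha2, hs2⟩ := wait_chain G v v tmax t htle hmaxni hvt
    obtain ⟨w, wt, g0, g1, ga, gs⟩ := walk_concat _ ha1 ha2 (by rw [e1, f0])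
    have hfin := dMinWeight_le_of_walk G v v t (g0.trans e0) (g1.trans f1) ga
    rw [gs, hs1, hs2] at hfin
    simpa using hfin
  · rw [TemporalGraph.dist, if_neg hvz]
    apply le_sInf
    rintro x ⟨m, vs, ts, hpath, hdep, rfl⟩
    obtain ⟨hvs0, hvsm, hdist, hedge, hmono⟩ := hpath
    have hm : 1 ≤ m := by
      rcases Nat.eq_zero_or_pos m with h | h
      · exfalso
        apply hvz
        rw [← hvs0, ← hvsm, h]
      · exact h
    have hniL : ∀ i, 1 ≤ i → i ≤ m → (vs (i - 1), ts i) ∈ G.NonIsolated :=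
      fun i h1 h2 => ⟨_, hedge i h1 h2, Sym2.mem_mk_left _ _⟩
    have hniR : ∀ i, 1 ≤ i → i ≤ m → (vs i, ts i) ∈ G.NonIsolated :=
      fun i h1 h2 => ⟨_, hedge i h1 h2, Sym2.mem_mk_right _ _⟩
    have key : ∀ k, k < m → ∃ (n : ℕ) (w : ℕ → Unit ⊕ V × ℕ) (wt : ℕ → ℕ),
        w 0 = Sum.inl () ∧ w n = Sum.inr (vs (m - 1 - k), ts (m - k)) ∧
        (∀ i, i < n → TemporalGraph.DArc G z (w i) (w (i + 1)) (wt i)) ∧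
        ∑ i ∈ Finset.range n, wt i = k + 1 := by
      intro k
      induction k with
      | zero =>
        intro hk
        have hnizm : (z, ts m) ∈ G.NonIsolated := by
          have := hniR m hm (le_refl m)
          rwa [hvsm] at this
        have hb : ts m ≤ G.tau := nonisolated_time_le G hnizm
        have hmaxni : (z, tmax) ∈ G.NonIsolated := by
          rw [htmax]
          exact Nat.findGreatest_spec (P := fun s => (z, s) ∈ G.NonIsolated) hb hnizm
        have hmax : ∀ t'', (z, t'') ∈ G.NonIsolated → t'' ≤ tmax := by
          intro t'' h
          rw [htmax]
          exact Nat.le_findGreatest (nonisolated_time_le G h) h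
        have arc0 : TemporalGraph.DArc G z (Sum.inl ()) (Sum.inr (z, tmax)) 0 :=
          ⟨rfl, rfl, hmaxni, hmax⟩
        have hzne : z ≠ vs (m - 1) := by
          rw [← hvsm]
          exact hdist m (m - 1) (le_refl m) (by omega) (by omega)
        have hEz : TemporalGraph.DArc G z (Sum.inr (z, ts m)) (Sum.inr (vs (m - 1), ts m)) 1 := by
          refine Or.inl ⟨rfl, rfl, hzne, ?_⟩
          rw [Sym2.eq_swap, ← hvsm]
          exact hedge m hm (le_refl m)
        obtain ⟨w1, wt1, e0, e1, ha1, hs1⟩ := walk_single _ arc0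
        obtain ⟨n2, w2, wt2, f0, f1, ha2, hs2⟩ :=
          wait_chain G z z tmax (ts m) (hmax _ hnizm) hmaxni hnizm
        obtain ⟨w3, wt3, i0, i1, ha3, hs3⟩ := walk_single _ hEz
        obtain ⟨wa, wta, g0, g1, ga, gs⟩ := walk_concat _ ha1 ha2 (by rw [e1, f0])
        obtain ⟨wb, wtb, j0, j1, ja, js⟩ := walk_concat _ ga ha3 (by rw [g1, f1, i0])
        refine ⟨1 + n2 + 1, wb, wtb, j0.trans (g0.trans e0), ?_, ja, by omega⟩
        rw [show m - 1 - 0 = m - 1 from by omega, show m - 0 = m from by omega, j1, i1]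
      | succ k ih =>
        intro hk
        obtain ⟨n, w, wt, a0, a1, aa, as⟩ := ih (by omega)
        set j := m - 1 - k with hj
        have hj1 : 1 ≤ j := by omega
        have hjk : m - k = j + 1 := by omega
        rw [hjk] at a1
        have hniA : (vs j, ts (j + 1)) ∈ G.NonIsolated := by
          have := hniL (j + 1) (by omega) (by omega)
          simpa using this
        have hniB : (vs j, ts j) ∈ G.NonIsolated := hniR j hj1 (by omega)
        have htsle : ts j ≤ ts (j + 1) := hmono j hj1 (by omega)
        obtain ⟨n2, w2, wt2, f0, f1, ha2, hs2⟩ :=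
          wait_chain G z (vs j) (ts (j + 1)) (ts j) htsle hniA hniB
        have hne : vs j ≠ vs (j - 1) := hdist j (j - 1) (by omega) (by omega) (by omega)
        have hEj : TemporalGraph.DArc G z (Sum.inr (vs j, ts j))
            (Sum.inr (vs (j - 1), ts j)) 1 := by
          refine Or.inl ⟨rfl, rfl, hne, ?_⟩
          rw [Sym2.eq_swap]
          exact hedge j hj1 (by omega)
        obtain ⟨w3, wt3, i0, i1, ha3, hs3⟩ := walk_single _ hEj
        obtain ⟨wa, wta, g0, g1, ga, gs⟩ := walk_concat _ aa ha2 (by rw [a1, f0])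
        obtain ⟨wb, wtb, j0, j1, ja, js⟩ := walk_concat _ ga ha3 (by rw [g1, f1, i0])
        refine ⟨n + n2 + 1, wb, wtb, j0.trans (g0.trans a0), ?_, ja, by omega⟩
        rw [show m - 1 - (k + 1) = j - 1 from by omega, show m - (k + 1) = j from by omega,
          j1, i1]
    obtain ⟨n, w, wt, a0, a1, aa, as⟩ := key (m - 1) (by omega)
    rw [show m - 1 - (m - 1) = 0 from by omega, show m - (m - 1) = 1 from by omega,
      hvs0] at a1
    have hni1 : (v, ts 1) ∈ G.NonIsolated := by
      have := hniL 1 (le_refl 1) hm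
      simpa [hvs0] using this
    obtain ⟨n2, w2, wt2, f0, f1, ha2, hs2⟩ := wait_chain G z v (ts 1) t hdep hni1 hvt
    obtain ⟨wa, wta, g0, g1, ga, gs⟩ := walk_concat _ aa ha2 (by rw [a1, f0])
    have hfin := dMinWeight_le_of_walk G z v t (g0.trans a0) (g1.trans f1) ga
    rw [gs, as, hs2] at hfin
    have : (m - 1 + 1 + 0 : ℕ) = m := by omega
    rw [this] at hfin
    exact hfin

end MainLemmas

/-- In the auxiliary weighted directed graph `D`, for every
non-isolated vertex appearance `(v,t)`, the minimum total arc weight of a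
directed path from the special vertex `z` to `v_t` equals `d(v,t)`. -/
theorem statement15 {V : Type*} (G : TemporalGraph V) (z : V) :
    ∀ v t, (v, t) ∈ G.NonIsolated → G.dMinWeight z v t = G.dist z v t := by
  intro v t hvt
  exact le_antisymm (dMinWeight_le_dist G z v t hvt) (dist_le_dMinWeight G z v t)
end
end
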